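/- arXiv:2301.02628 — 3 statements merged into one kernel-verified Lean document; each statement's English description precedes it below -/
import Mathlib

section
/- Suppose S is an admissible pinnacle set of B_{2k+1} that is not admissible in D_{2k+1}, with negative part N = S ∩ (-ℕ). Then |N| and |S| have the same parity (equivalently, k + |N| is even). -/
/-- The pinnacle set of a word `w : Fin n → ℤ`: values `w i` (for `0 < i < n-1`)
strictly larger than both neighbors. -/
def PinSet (n : ℕ) (w : Fin n → ℤ) : Set ℤ :=
  {x | ∃ (i : ℕ) (h0 : 0 < i) (h2 : i + 1 < n),
    w ⟨i, by omega⟩ = x ∧ w ⟨i - 1, by omega⟩ < w ⟨i, by omega⟩ ∧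
      w ⟨i + 1, h2⟩ < w ⟨i, by omega⟩}

/-- `w : Fin n → ℤ` is the one-line notation of a signed permutation of rank `n`:
the absolute values of its entries are distinct elements of `{1,...,n}`
(hence a bijection onto `{1,...,n}`). -/
def IsSignedPerm (n : ℕ) (w : Fin n → ℤ) : Prop :=
  (∀ i, 1 ≤ |w i| ∧ |w i| ≤ (n : ℤ)) ∧ Function.Injective fun i => |w i|

/-- `S` is an admissible pinnacle set of the hyperoctahedral group `B_n`. -/
def APSB (n : ℕ) (S : Finset ℤ) : Prop :=
  ∃ w : Fin n → ℤ, IsSignedPerm n w ∧ PinSet n w = ↑S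

/-- `S` is an admissible pinnacle set of the type `D` group `D_n`
(signed permutations with an even number of negative one-line entries). -/
def APSD (n : ℕ) (S : Finset ℤ) : Prop :=
  ∃ w : Fin n → ℤ, IsSignedPerm n w ∧
    Even (Finset.univ.filter fun i => w i < 0).card ∧ PinSet n w = ↑S

/-- `S` is an admissible pinnacle set of the symmetric group `S_n`
(an unsigned permutation is a signed permutation with all entries positive). -/
def APSA (n : ℕ) (S : Finset ℤ) : Prop :=
  ∃ w : Fin n → ℤ, IsSignedPerm n w ∧ (∀ i, 0 < w i) ∧ PinSet n w = ↑S

/-- `T` is an admissible pinnacle set of the totally ordered finite set `X ⊆ ℤ`: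
it is the pinnacle set of some arrangement of the elements of `X`. -/
def APSOn (X : Finset ℤ) (T : Finset ℤ) : Prop :=
  ∃ w : Fin X.card → ℤ, Function.Injective w ∧ (∀ i, w i ∈ X) ∧
    PinSet X.card w = ↑T



namespace PinAux

open Finset

/-- pinnacle-at predicate for ℕ-indexed words -/
def PinAt (n : ℕ) (w : ℕ → ℤ) (i : ℕ) : Prop :=
  0 < i ∧ i + 1 < n ∧ w (i-1) < w i ∧ w (i+1) < w i

instance (n : ℕ) (w : ℕ → ℤ) : DecidablePred (PinAt n w) := fun i => by
  unfold PinAt; infer_instance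

lemma no_pin_succ {n : ℕ} {w : ℕ → ℤ} {q : ℕ} (hq : PinAt n w q) : ¬ PinAt n w (q+1) := by
  rintro ⟨-, -, h3, -⟩
  simp only [Nat.add_sub_cancel] at h3
  exact absurd hq.2.2.2 (not_lt.2 h3.le)

lemma shift_pin {n q : ℕ} {w : ℕ → ℤ} {i : ℕ} (hi : 0 < i) :
    PinAt (n - (q+1)) (fun j => w (j + (q+1))) i ↔ PinAt n w (i + (q+1)) := by
  unfold PinAt
  have e1 : i + (q+1) - 1 = (i-1) + (q+1) := by omega
  have e2 : i + (q+1) + 1 = (i+1) + (q+1) := by omega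
  constructor
  · rintro ⟨h1, h2, h3, h4⟩
    exact ⟨by omega, by omega, by rw [e1]; exact h3, by rw [e2]; exact h4⟩
  · rintro ⟨h1, h2, h3, h4⟩
    exact ⟨hi, by omega, by rw [e1] at h3; exact h3, by rw [e2] at h4; exact h4⟩

lemma count_split (n a : ℕ) (ha : a ≤ n) (p : ℕ → Prop) [DecidablePred p] :
    ((range n).filter p).card = ((range a).filter p).card + ((Ico a n).filter p).card := by
  rw [range_eq_Ico, ← Finset.Ico_union_Ico_eq_Ico (Nat.zero_le a) ha, filter_union,
    card_union_of_disjoint]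
  · rw [range_eq_Ico]
  exact disjoint_filter_filter (p := p) (q := p) (Finset.Ico_disjoint_Ico_consecutive 0 a n)

lemma count_shift (a n : ℕ) (p : ℕ → Prop) [DecidablePred p] :
    ((Ico a n).filter p).card = ((range (n - a)).filter (fun i => p (i + a))).card := by
  apply Finset.card_nbij (i := fun j => j - a)
  · intro x hx
    simp only [mem_coe, mem_filter, mem_Ico, mem_range] at hx ⊢
    constructor
    · omega
    · have : x - a + a = x := by omega
      rw [this]; exact hx.2
  · intro x hx y hy hxy
    simp only [coe_filter, Set.mem_setOf_eq, mem_Ico] at hx hy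
    simp only at hxy
    omega
  · intro x hx
    simp only [coe_filter, Set.mem_setOf_eq, mem_range, mem_Ico] at hx ⊢
    exact ⟨x + a, ⟨⟨by omega, by omega⟩, hx.2⟩, by simp⟩


lemma pin_card_step {n : ℕ} {w : ℕ → ℤ} {q : ℕ} (hq : PinAt n w q)
    (P : ℤ → Prop) [DecidablePred P] (hPq : P (w q))
    (hmin : ∀ j, PinAt n w j → P (w j) → q ≤ j) :
    ((range n).filter (fun j => PinAt n w j ∧ P (w j))).card =
      ((range (n-(q+1))).filter
        (fun j => PinAt (n-(q+1)) (fun i => w (i + (q+1))) j ∧ P (w (j + (q+1))))).card + 1 := by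
  have hqn : q < n := by have := hq.2.1; omega
  have key : (((range n).filter (fun j => PinAt n w j ∧ P (w j))).erase q).card =
      ((range (n-(q+1))).filter
        (fun j => PinAt (n-(q+1)) (fun i => w (i + (q+1))) j ∧ P (w (j + (q+1))))).card := by
    apply Finset.card_nbij (i := fun j => j - (q+1))
    · intro x hx
      simp only [mem_coe, mem_erase, mem_filter, mem_range] at hx ⊢
      obtain ⟨hne, hxn, hpx, hPx⟩ := hx
      have hge : q ≤ x := hmin x hpx hPx
      have hx2 : q + 2 ≤ x := by
        rcases Nat.lt_or_ge x (q+2) with h | h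
        · have : x = q ∨ x = q + 1 := by omega
          rcases this with rfl | rfl
          · exact absurd rfl hne
          · exact absurd hpx (no_pin_succ hq)
        · exact h
      have hx0 : 0 < x - (q+1) := by omega
      have e : x - (q+1) + (q+1) = x := by omega
      refine ⟨by have := hpx.2.1; omega, ?_, by rw [e]; exact hPx⟩
      rw [shift_pin hx0, e]; exact hpx
    · intro x hx y hy hxy
      simp only [coe_erase, Set.mem_diff, mem_coe, mem_filter, mem_range] at hx hy
      simp only at hxy
      have hgx : q ≤ x := hmin x hx.1.2.1 hx.1.2.2
      have hgy : q ≤ y := hmin y hy.1.2.1 hy.1.2.2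
      have hnex : x ≠ q := hx.2
      have hney : y ≠ q := hy.2
      omega
    · intro x hx
      simp only [coe_filter, Set.mem_setOf_eq, mem_range, coe_erase, Set.mem_diff, mem_coe,
        mem_filter, mem_erase] at hx ⊢
      obtain ⟨hxr, hpx, hPx⟩ := hx
      have h0 : 0 < x := hpx.1
      have hx1 : x + 1 < n - (q+1) := hpx.2.1
      have hxn : x + (q+1) < n := by omega
      refine ⟨x + (q+1), ⟨⟨hxn, (shift_pin h0).1 hpx, hPx⟩, by simp; omega⟩, by simp⟩
  have hqmem : q ∈ (range n).filter (fun j => PinAt n w j ∧ P (w j)) := by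
    simp only [mem_filter, mem_range]; exact ⟨hqn, hq, hPq⟩
  rw [← key, Finset.card_erase_of_mem hqmem]
  have : 0 < ((range n).filter (fun j => PinAt n w j ∧ P (w j))).card :=
    Finset.card_pos.2 ⟨q, hqmem⟩
  omega

lemma pin_card_step0 {n : ℕ} {w : ℕ → ℤ} {q : ℕ} (hq : PinAt n w q)
    (P : ℤ → Prop) [DecidablePred P] (hnPq : ¬ P (w q))
    (hmin : ∀ j, PinAt n w j → P (w j) → q ≤ j) :
    ((range n).filter (fun j => PinAt n w j ∧ P (w j))).card =
      ((range (n-(q+1))).filter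
        (fun j => PinAt (n-(q+1)) (fun i => w (i + (q+1))) j ∧ P (w (j + (q+1))))).card := by
  apply Finset.card_nbij (i := fun j => j - (q+1))
  · intro x hx
    simp only [mem_coe, mem_filter, mem_range] at hx ⊢
    obtain ⟨hxn, hpx, hPx⟩ := hx
    have hge : q ≤ x := hmin x hpx hPx
    have hx2 : q + 2 ≤ x := by
      rcases Nat.lt_or_ge x (q+2) with h | h
      · have : x = q ∨ x = q + 1 := by omega
        rcases this with rfl | rfl
        · exact absurd hPx hnPq
        · exact absurd hpx (no_pin_succ hq)
      · exact h
    have hx0 : 0 < x - (q+1) := by omega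
    have e : x - (q+1) + (q+1) = x := by omega
    refine ⟨by have := hpx.2.1; omega, ?_, by rw [e]; exact hPx⟩
    rw [shift_pin hx0, e]; exact hpx
  · intro x hx y hy hxy
    simp only [coe_filter, Set.mem_setOf_eq, mem_range] at hx hy
    simp only at hxy
    have hgx : q ≤ x := hmin x hx.2.1 hx.2.2
    have hgy : q ≤ y := hmin y hy.2.1 hy.2.2
    have : x ≠ q := by rintro rfl; exact hnPq hx.2.2
    have : y ≠ q := by rintro rfl; exact hnPq hy.2.2
    omega
  · intro x hx
    simp only [coe_filter, Set.mem_setOf_eq, mem_range] at hx ⊢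
    obtain ⟨hxr, hpx, hPx⟩ := hx
    have h0 : 0 < x := hpx.1
    have hx1 : x + 1 < n - (q+1) := hpx.2.1
    have hxn : x + (q + 1) < n := by omega
    exact ⟨x + (q+1), ⟨hxn, (shift_pin h0).1 hpx, hPx⟩, by simp⟩

lemma exists_min_pin {n : ℕ} {w : ℕ → ℤ} (P : ℤ → Prop) [DecidablePred P]
    (h : ∃ q, PinAt n w q ∧ P (w q)) :
    ∃ q₀, PinAt n w q₀ ∧ P (w q₀) ∧ ∀ j, PinAt n w j → P (w j) → q₀ ≤ j := by
  obtain ⟨q, hq, hPq⟩ := h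
  set A := (range n).filter (fun j => PinAt n w j ∧ P (w j)) with hA
  have hqA : q ∈ A := by
    simp only [hA, mem_filter, mem_range]
    exact ⟨by have := hq.2.1; omega, hq, hPq⟩
  have hmem := A.min'_mem ⟨q, hqA⟩
  simp only [hA, mem_filter, mem_range] at hmem
  refine ⟨A.min' ⟨q, hqA⟩, hmem.2.1, hmem.2.2, ?_⟩
  intro j hj hjP
  exact A.min'_le j (by simp only [hA, mem_filter, mem_range]; exact ⟨by have := hj.2.1; omega, hj, hjP⟩)

lemma key2 (t : ℤ) : ∀ n : ℕ, ∀ w : ℕ → ℤ,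
    0 < ((range n).filter (fun j => PinAt n w j ∧ w j < t)).card →
    2 * ((range n).filter (fun j => PinAt n w j ∧ w j < t)).card + 1
      ≤ ((range n).filter (fun j => w j < t)).card := by
  intro n
  induction n using Nat.strong_induction_on with
  | _ n IH =>
    intro w hpos
    have hne := Finset.card_pos.1 hpos
    obtain ⟨q₀, hq₀pin, hq₀t, hmin⟩ := exists_min_pin (fun z => z < t)
      (by obtain ⟨q, hq⟩ := hne; simp only [mem_filter, mem_range] at hq; exact ⟨q, hq.2⟩)
    have h1q : 1 ≤ q₀ := hq₀pin.1
    have hq1n : q₀ + 1 < n := hq₀pin.2.1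
    have hleft : 2 ≤ ((range (q₀+1)).filter (fun j => w j < t)).card := by
      have hsub : ({q₀ - 1, q₀} : Finset ℕ) ⊆ (range (q₀+1)).filter (fun j => w j < t) := by
        intro x hx
        simp only [mem_insert, mem_singleton] at hx
        simp only [mem_filter, mem_range]
        rcases hx with rfl | rfl
        · exact ⟨by omega, lt_trans hq₀pin.2.2.1 hq₀t⟩
        · exact ⟨by omega, hq₀t⟩
      calc 2 = ({q₀ - 1, q₀} : Finset ℕ).card := by
                rw [Finset.card_insert_of_notMem (by simp only [mem_singleton]; omega),
                  card_singleton]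
        _ ≤ _ := Finset.card_le_card hsub
    have hsplitf := count_split n (q₀+1) (by omega) (fun j => w j < t)
    have hshiftf := count_shift (q₀+1) n (fun j => w j < t)
    have hstep := pin_card_step hq₀pin (fun z => z < t) hq₀t hmin
    beta_reduce at hshiftf hstep
    rcases Nat.eq_zero_or_pos
      (((range (n-(q₀+1))).filter
        (fun j => PinAt (n-(q₀+1)) (fun i => w (i + (q₀+1))) j ∧ w (j + (q₀+1)) < t)).card)
      with h0 | hpos'
    · have hsub : ({q₀ - 1, q₀, q₀ + 1} : Finset ℕ) ⊆ (range n).filter (fun j => w j < t) := by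
        intro x hx
        simp only [mem_insert, mem_singleton] at hx
        simp only [mem_filter, mem_range]
        rcases hx with rfl | rfl | rfl
        · exact ⟨by omega, lt_trans hq₀pin.2.2.1 hq₀t⟩
        · exact ⟨by omega, hq₀t⟩
        · exact ⟨by omega, lt_trans hq₀pin.2.2.2 hq₀t⟩
      have hcard3 : ({q₀ - 1, q₀, q₀ + 1} : Finset ℕ).card = 3 := by
        rw [Finset.card_insert_of_notMem (by simp only [mem_insert, mem_singleton]; omega),
          Finset.card_insert_of_notMem (by simp only [mem_singleton]; omega), card_singleton]
      have := Finset.card_le_card hsub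
      omega
    · have hk2 := IH (n - (q₀+1)) (by omega) (fun i => w (i + (q₀+1))) hpos'
      beta_reduce at hk2
      omega

lemma key3 (t : ℤ) : ∀ n : ℕ, ∀ w : ℕ → ℤ,
    (∃ q0, PinAt n w q0 ∧ w q0 = t) →
    2 * ((range n).filter (fun j => PinAt n w j ∧ w j < t)).card + 2
      ≤ ((range n).filter (fun j => w j < t)).card := by
  intro n
  induction n using Nat.strong_induction_on with
  | _ n IH =>
    rintro w hex
    obtain ⟨q₀, hq₀pin, hq₀t, hmin⟩ := exists_min_pin (fun z => z ≤ t)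
      (by obtain ⟨q0, h, ht⟩ := hex; exact ⟨q0, h, le_of_eq ht⟩)
    have hminLT : ∀ j, PinAt n w j → w j < t → q₀ ≤ j := fun j hj hjt => hmin j hj hjt.le
    have h1q : 1 ≤ q₀ := hq₀pin.1
    have hq1n : q₀ + 1 < n := hq₀pin.2.1
    have hsplitf := count_split n (q₀+1) (by omega) (fun j => w j < t)
    have hshiftf := count_shift (q₀+1) n (fun j => w j < t)
    beta_reduce at hshiftf
    rcases eq_or_lt_of_le hq₀t with heq | hlt
    · -- w q₀ = t
      have hstep := pin_card_step0 hq₀pin (fun z => z < t) (by rw [heq]; exact lt_irrefl t) hminLT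
      beta_reduce at hstep
      rcases Nat.eq_zero_or_pos
        (((range (n-(q₀+1))).filter
          (fun j => PinAt (n-(q₀+1)) (fun i => w (i + (q₀+1))) j ∧ w (j + (q₀+1)) < t)).card)
        with h0 | hpos'
      · have hsub : ({q₀ - 1, q₀ + 1} : Finset ℕ) ⊆ (range n).filter (fun j => w j < t) := by
          intro x hx
          simp only [mem_insert, mem_singleton] at hx
          simp only [mem_filter, mem_range]
          rcases hx with rfl | rfl
          · exact ⟨by omega, by rw [← heq]; exact hq₀pin.2.2.1⟩
          · exact ⟨by omega, by rw [← heq]; exact hq₀pin.2.2.2⟩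
        have hcard2 : ({q₀ - 1, q₀ + 1} : Finset ℕ).card = 2 := by
          rw [Finset.card_insert_of_notMem (by simp only [mem_singleton]; omega), card_singleton]
        have := Finset.card_le_card hsub
        omega
      · have hk2 := key2 t (n - (q₀+1)) (fun i => w (i + (q₀+1))) hpos'
        beta_reduce at hk2
        have hleft : 1 ≤ ((range (q₀+1)).filter (fun j => w j < t)).card := by
          have hsub : ({q₀ - 1} : Finset ℕ) ⊆ (range (q₀+1)).filter (fun j => w j < t) := by
            intro x hx
            simp only [mem_singleton] at hx
            subst hx
            simp only [mem_filter, mem_range]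
            exact ⟨by omega, by rw [← heq]; exact hq₀pin.2.2.1⟩
          have := Finset.card_le_card hsub
          simpa using this
        omega
    · -- w q₀ < t : recurse with key3
      have hstep := pin_card_step hq₀pin (fun z => z < t) hlt hminLT
      beta_reduce at hstep
      obtain ⟨q0, hq0pin, hq0t⟩ := hex
      have hq02 : q₀ + 2 ≤ q0 := by
        have h1 : q₀ ≤ q0 := hmin q0 hq0pin hq0t.le
        have h2 : q0 ≠ q₀ := by rintro rfl; exact absurd hq0t (ne_of_lt hlt)
        have h3 : q0 ≠ q₀ + 1 := by rintro rfl; exact absurd hq0pin (no_pin_succ hq₀pin)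
        omega
      have hex' : ∃ i0, PinAt (n - (q₀+1)) (fun i => w (i + (q₀+1))) i0 ∧
          (fun i => w (i + (q₀+1))) i0 = t := by
        refine ⟨q0 - (q₀+1), ?_, ?_⟩
        · rw [shift_pin (by omega)]
          have e : q0 - (q₀+1) + (q₀+1) = q0 := by omega
          rw [e]; exact hq0pin
        · show w (q0 - (q₀+1) + (q₀+1)) = t
          have e : q0 - (q₀+1) + (q₀+1) = q0 := by omega
          rw [e]; exact hq0t
      have hk3 := IH (n - (q₀+1)) (by omega) (fun i => w (i + (q₀+1))) hex'
      beta_reduce at hk3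
      have hleft : 2 ≤ ((range (q₀+1)).filter (fun j => w j < t)).card := by
        have hsub : ({q₀ - 1, q₀} : Finset ℕ) ⊆ (range (q₀+1)).filter (fun j => w j < t) := by
          intro x hx
          simp only [mem_insert, mem_singleton] at hx
          simp only [mem_filter, mem_range]
          rcases hx with rfl | rfl
          · exact ⟨by omega, lt_trans hq₀pin.2.2.1 hlt⟩
          · exact ⟨by omega, hlt⟩
        calc 2 = ({q₀ - 1, q₀} : Finset ℕ).card := by
                  rw [Finset.card_insert_of_notMem (by simp only [mem_singleton]; omega),
                    card_singleton]
          _ ≤ _ := Finset.card_le_card hsub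
      omega

/-- extension of a Fin-word to ℕ -/
def ext (n : ℕ) (w : Fin n → ℤ) (j : ℕ) : ℤ :=
  if h : j < n then w ⟨j, h⟩ else 0

lemma ext_pin_iff {n : ℕ} {w : Fin n → ℤ} {i : ℕ} :
    PinAt n (ext n w) i ↔
      ∃ (h0 : 0 < i) (h2 : i + 1 < n),
        (ext n w) i = w ⟨i, by omega⟩ ∧ w ⟨i - 1, by omega⟩ < w ⟨i, by omega⟩ ∧
          w ⟨i + 1, h2⟩ < w ⟨i, by omega⟩ := by
  unfold PinAt ext
  constructor
  · rintro ⟨h0, h2, h3, h4⟩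
    refine ⟨h0, h2, by rw [dif_pos (by omega : i < n)], ?_, ?_⟩
    · rw [dif_pos (by omega : i - 1 < n), dif_pos (by omega : i < n)] at h3; exact h3
    · rw [dif_pos h2, dif_pos (by omega : i < n)] at h4; exact h4
  · rintro ⟨h0, h2, -, h3, h4⟩
    refine ⟨h0, h2, ?_, ?_⟩
    · rw [dif_pos (by omega : i - 1 < n), dif_pos (by omega : i < n)]; exact h3
    · rw [dif_pos h2, dif_pos (by omega : i < n)]; exact h4

lemma mem_pinset_iff {n : ℕ} {w : Fin n → ℤ} {x : ℤ} :
    x ∈ PinSet n w ↔ ∃ i, PinAt n (ext n w) i ∧ (ext n w) i = x := by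
  constructor
  · rintro ⟨i, h0, h2, hval, hl, hr⟩
    refine ⟨i, ext_pin_iff.2 ⟨h0, h2, ?_, hl, hr⟩, ?_⟩
    · show ext n w i = _
      unfold ext; rw [dif_pos (by omega : i < n)]
    · show ext n w i = x
      unfold ext; rw [dif_pos (by omega : i < n)]; exact hval
  · rintro ⟨i, hpin, hval⟩
    obtain ⟨h0, h2, he, hl, hr⟩ := ext_pin_iff.1 hpin
    exact ⟨i, h0, h2, by rw [← he, hval], hl, hr⟩

lemma crit_of_word {n : ℕ} {w : Fin n → ℤ} (hinj : Function.Injective w)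
    {S : Finset ℤ} (hpin : PinSet n w = ↑S) {t : ℤ} (ht : t ∈ S) :
    2 * (S.filter (· ≤ t)).card ≤ ((Finset.univ.image w).filter (· < t)).card := by
  set W := ext n w with hW
  have hWval : ∀ j, j < n → ∀ h : j < n, W j = w ⟨j, h⟩ := by
    intro j hj h; simp only [hW, ext, dif_pos h]
  have hWinj : ∀ i j, i < n → j < n → W i = W j → i = j := by
    intro i j hi hj hij
    rw [hWval i hi hi, hWval j hj hj] at hij
    have := hinj hij
    exact Fin.mk.inj_iff.1 this
  -- value-count identification
  have hfcount : ((range n).filter (fun j => W j < t)).card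
      = ((Finset.univ.image w).filter (· < t)).card := by
    apply Finset.card_nbij (i := W)
    · intro x hx
      simp only [mem_coe, mem_filter, mem_range] at hx
      simp only [mem_coe, mem_filter, Finset.mem_image]
      exact ⟨⟨⟨x, hx.1⟩, Finset.mem_univ _, (hWval x hx.1 hx.1).symm⟩, hx.2⟩
    · intro x hx y hy hxy
      simp only [coe_filter, Set.mem_setOf_eq, mem_range] at hx hy
      exact hWinj x y hx.1 hy.1 hxy
    · intro x hx
      simp only [coe_filter, Set.mem_setOf_eq, Finset.mem_image] at hx ⊢
      obtain ⟨⟨i, -, hi⟩, hxt⟩ := hx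
      refine ⟨i.1, ⟨by simp [mem_range, i.2], ?_⟩, ?_⟩
      · rw [hWval i.1 i.2 i.2]; simp only [Fin.eta]; rw [hi]; exact hxt
      · rw [hWval i.1 i.2 i.2]; simp only [Fin.eta]; exact hi
    -- pinnacle count identification
  have hpcount : (S.filter (· ≤ t)).card
      = ((range n).filter (fun j => PinAt n W j ∧ W j ≤ t)).card := by
    symm
    apply Finset.card_nbij (i := W)
    · intro j hj
      simp only [mem_coe, mem_filter, mem_range] at hj
      simp only [mem_coe, mem_filter]
      refine ⟨?_, hj.2.2⟩
      have : W j ∈ PinSet n w := mem_pinset_iff.2 ⟨j, hj.2.1, rfl⟩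
      rwa [hpin, Finset.mem_coe] at this
    · intro x hx y hy hxy
      simp only [coe_filter, Set.mem_setOf_eq, mem_range] at hx hy
      exact hWinj x y hx.1 hy.1 hxy
    · intro s hs
      simp only [coe_filter, Set.mem_setOf_eq, mem_range] at hs ⊢
      have : s ∈ PinSet n w := by rw [hpin]; exact Finset.mem_coe.2 hs.1
      obtain ⟨i, hpin', hval⟩ := mem_pinset_iff.1 this
      rw [← hW] at hpin' hval
      exact ⟨i, ⟨by have := hpin'.2.1; omega, hpin', by rw [hval]; exact hs.2⟩, hval⟩
  -- split ≤ into < and =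
  have htS : t ∈ PinSet n w := by rw [hpin]; exact Finset.mem_coe.2 ht
  obtain ⟨i0, hi0pin, hi0val⟩ := mem_pinset_iff.1 htS
  rw [← hW] at hi0pin hi0val
  have hi0n : i0 < n := by have := hi0pin.2.1; omega
  have hsplit : (range n).filter (fun j => PinAt n W j ∧ W j ≤ t)
      = ((range n).filter (fun j => PinAt n W j ∧ W j < t))
        ∪ ((range n).filter (fun j => PinAt n W j ∧ W j = t)) := by
    ext j
    simp only [mem_union, mem_filter, mem_range]
    constructor
    · rintro ⟨h1, h2, h3⟩
      rcases lt_or_eq_of_le h3 with h | h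
      · exact Or.inl ⟨h1, h2, h⟩
      · exact Or.inr ⟨h1, h2, h⟩
    · rintro (⟨h1, h2, h3⟩ | ⟨h1, h2, h3⟩)
      · exact ⟨h1, h2, le_of_lt h3⟩
      · exact ⟨h1, h2, le_of_eq h3⟩
  have hdisj : Disjoint ((range n).filter (fun j => PinAt n W j ∧ W j < t))
      ((range n).filter (fun j => PinAt n W j ∧ W j = t)) := by
    rw [Finset.disjoint_left]
    intro j hj1 hj2
    simp only [mem_filter] at hj1 hj2
    rw [hj2.2.2] at hj1
    exact absurd hj1.2.2 (lt_irrefl t)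
  have heqset : (range n).filter (fun j => PinAt n W j ∧ W j = t) = {i0} := by
    ext j
    simp only [mem_filter, mem_range, mem_singleton]
    constructor
    · rintro ⟨h1, h2, h3⟩
      exact hWinj j i0 h1 hi0n (by rw [h3, hi0val])
    · rintro rfl
      exact ⟨hi0n, hi0pin, hi0val⟩
  have hk3 := key3 t n W ⟨i0, hi0pin, hi0val⟩
  rw [hsplit, Finset.card_union_of_disjoint hdisj, heqset, card_singleton] at hpcount
  omega


/-- the `i`-th smallest element of a finset of integers -/
def sf (s : Finset ℤ) (i : ℕ) : ℤ := (s.sort (· ≤ ·)).getD i 0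

lemma sf_eq_get {s : Finset ℤ} {i : ℕ} (h : i < s.card) :
    sf s i = (s.sort (· ≤ ·)).get ⟨i, by rwa [Finset.length_sort]⟩ := by
  unfold sf
  rw [List.getD_eq_getElem _ _ (by rwa [Finset.length_sort])]
  simp [List.get_eq_getElem]

lemma sf_mem {s : Finset ℤ} {i : ℕ} (h : i < s.card) : sf s i ∈ s := by
  rw [sf_eq_get h]
  rw [← Finset.mem_sort (α := ℤ) (· ≤ ·)]
  apply List.get_mem

lemma sf_strictMono {s : Finset ℤ} {i j : ℕ} (hij : i < j) (hj : j < s.card) :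
    sf s i < sf s j := by
  rw [sf_eq_get (lt_trans hij hj), sf_eq_get hj]
  exact (Finset.sortedLT_sort s).strictMono_get (by simpa using hij)

lemma sf_surj {s : Finset ℤ} {x : ℤ} (hx : x ∈ s) : ∃ i, i < s.card ∧ sf s i = x := by
  rw [← Finset.mem_sort (α := ℤ) (· ≤ ·)] at hx
  obtain ⟨⟨i, hi⟩, hix⟩ := List.mem_iff_get.1 hx
  have hi' : i < s.card := by rwa [Finset.length_sort] at hi
  exact ⟨i, hi', by rw [sf_eq_get hi']; exact hix⟩

lemma sf_count_lt {s : Finset ℤ} {j : ℕ} (h : j < s.card) :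
    (s.filter (· < sf s j)).card = j := by
  have : (Finset.range j).card = (s.filter (· < sf s j)).card := by
    apply Finset.card_nbij (i := fun i => sf s i)
    · intro i hi
      simp only [mem_coe, mem_range] at hi
      simp only [mem_coe, mem_filter]
      exact ⟨sf_mem (lt_trans hi h), sf_strictMono hi h⟩
    · intro x hx y hy hxy
      simp only [coe_range, Set.mem_Iio] at hx hy
      by_contra hne
      rcases Nat.lt_or_ge x y with hl | hl
      · exact absurd hxy (ne_of_lt (sf_strictMono hl (lt_trans hy h)))
      · have : y < x := by omega
        exact absurd hxy.symm (ne_of_lt (sf_strictMono this (lt_trans hx h)))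
    · intro x hx
      simp only [coe_filter, Set.mem_setOf_eq] at hx
      obtain ⟨i, hi, hix⟩ := sf_surj hx.1
      refine ⟨i, ?_, hix⟩
      simp only [coe_range, Set.mem_Iio]
      by_contra hge
      have hge' : j ≤ i := by omega
      rcases eq_or_lt_of_le hge' with rfl | hlt
      · exact absurd hx.2 (by rw [hix]; exact lt_irrefl _)
      · have := sf_strictMono hlt hi
        rw [hix] at this
        exact absurd hx.2 (by omega)
  rw [← this, Finset.card_range]

lemma sf_count_le {s : Finset ℤ} {j : ℕ} (h : j < s.card) :
    (s.filter (· ≤ sf s j)).card = j + 1 := by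
  have hins : s.filter (· ≤ sf s j) = insert (sf s j) (s.filter (· < sf s j)) := by
    ext x
    simp only [mem_filter, mem_insert]
    constructor
    · rintro ⟨hx, hle⟩
      rcases eq_or_lt_of_le hle with heq | hlt
      · exact Or.inl heq
      · exact Or.inr ⟨hx, hlt⟩
    · rintro (rfl | ⟨hx, hlt⟩)
      · exact ⟨sf_mem h, le_refl _⟩
      · exact ⟨hx, le_of_lt hlt⟩
  rw [hins, Finset.card_insert_of_notMem (by simp only [mem_filter]; rintro ⟨-, h⟩; exact absurd h (lt_irrefl _)), sf_count_lt h]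

lemma sf_lt_of_count {s : Finset ℤ} {c : ℤ} {k : ℕ} (hk : k < s.card)
    (hc : k + 1 ≤ (s.filter (· < c)).card) : sf s k < c := by
  by_contra hge
  push_neg at hge
  have hsub : s.filter (· < c) ⊆ s.filter (· < sf s k) := by
    intro x hx
    simp only [mem_filter] at hx ⊢
    exact ⟨hx.1, lt_of_lt_of_le hx.2 hge⟩
  have := Finset.card_le_card hsub
  rw [sf_count_lt hk] at this
  omega


lemma sf_ne {s : Finset ℤ} {a b : ℕ} (hab : a ≠ b) (ha : a < s.card) (hb : b < s.card) :
    sf s a ≠ sf s b := by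
  rcases Nat.lt_or_ge a b with h | h
  · exact ne_of_lt (sf_strictMono h hb)
  · exact (ne_of_lt (sf_strictMono (by omega) ha)).symm

lemma filter_split {X S : Finset ℤ} (h : S ⊆ X) (p : ℤ → Prop) [DecidablePred p] :
    (X.filter p).card = ((X \ S).filter p).card + (S.filter p).card := by
  conv_lhs => rw [← Finset.sdiff_union_of_subset h]
  rw [filter_union, card_union_of_disjoint (disjoint_filter_filter sdiff_disjoint)]

/-- the canonical word realizing an admissible pinnacle set -/
noncomputable def wrd (X S : Finset ℤ) (m n : ℕ) (i : ℕ) : ℤ :=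
  if i < 2*m then (if i % 2 = 0 then sf (X \ S) (i/2) else sf S (i/2)) else sf (X \ S) (i - m)

lemma word_of_crit {n : ℕ} {X S : Finset ℤ} (hXcard : X.card = n)
    (hsub : S ⊆ X) (hn : 2 * S.card < n)
    (hcrit : ∀ t ∈ S, 2 * (S.filter (· ≤ t)).card ≤ (X.filter (· < t)).card) :
    ∃ w : Fin n → ℤ, Function.Injective w ∧ (∀ i, w i ∈ X) ∧
      (∀ x ∈ X, ∃ i, w i = x) ∧ PinSet n w = ↑S := by
  set m := S.card with hm
  set V := X \ S with hV
  have hVcard : V.card = n - m := by rw [hV, card_sdiff_of_subset hsub, hXcard, hm]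
  have hmn : m + 1 ≤ n - m := by omega
  set wd := wrd X S m n with hwd
  -- key counting fact
  have hkey : ∀ j, j < m → j + 2 ≤ (V.filter (· < sf S j)).card := by
    intro j hj
    have h1 := hcrit (sf S j) (sf_mem (by omega))
    rw [sf_count_le (by omega)] at h1
    have h2 := filter_split hsub (· < sf S j)
    rw [sf_count_lt (by omega)] at h2
    rw [← hV] at h2
    omega
  have hVS : ∀ j, j < m → sf V j < sf S j := by
    intro j hj
    exact sf_lt_of_count (by omega) (by have := hkey j hj; omega)
  have hVS' : ∀ j, j < m → sf V (j+1) < sf S j := by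
    intro j hj
    exact sf_lt_of_count (by omega) (by have := hkey j hj; omega)
  -- value lemmas
  have hwd_even : ∀ j, j < m → wd (2*j) = sf V j := by
    intro j hj
    show wrd X S m n (2*j) = _
    unfold wrd
    rw [if_pos (by omega), if_pos (by omega), ← hV]
    congr 1
    omega
  have hwd_odd : ∀ j, j < m → wd (2*j+1) = sf S j := by
    intro j hj
    show wrd X S m n (2*j+1) = _
    unfold wrd
    rw [if_pos (by omega), if_neg (by omega)]
    congr 1
    omega
  have hwd_tail : ∀ i, 2*m ≤ i → wd i = sf V (i - m) := by
    intro i hi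
    show wrd X S m n i = _
    unfold wrd
    rw [if_neg (by omega), ← hV]
  have hwd_right : ∀ j, j < m → wd (2*j+2) = sf V (j+1) := by
    intro j hj
    rcases Nat.lt_or_ge (j+1) m with h | h
    · have : 2*j+2 = 2*(j+1) := by omega
      rw [this, hwd_even (j+1) h]
    · have hj1 : j + 1 = m := by omega
      rw [hwd_tail (2*j+2) (by omega)]
      congr 1
      omega
  -- ascent at even / tail positions
  have hasc : ∀ i, i + 1 < n → (i % 2 = 0 ∨ 2*m ≤ i) → wd i < wd (i+1) := by
    intro i hin hcase
    rcases Nat.lt_or_ge i (2*m) with hlt | hge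
    · have hev : i % 2 = 0 := by
        rcases hcase with h | h
        · exact h
        · omega
      have hj : i / 2 < m := by omega
      have e1 : i = 2*(i/2) := by omega
      have e2 : i + 1 = 2*(i/2) + 1 := by omega
      rw [e1, hwd_even _ hj, hwd_odd _ hj]
      exact hVS _ hj
    · rw [hwd_tail i hge, hwd_tail (i+1) (by omega)]
      apply sf_strictMono (by omega) (by omega)
  -- classification of positions
  have hclass : ∀ i, i < n →
      (∃ j, j < m ∧ i = 2*j+1 ∧ wd i = sf S j) ∨
      (∃ j, j < n - m ∧ wd i = sf V j ∧ ((i < 2*m ∧ i = 2*j) ∨ (2*m ≤ i ∧ j = i - m))) := by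
    intro i hi
    rcases Nat.lt_or_ge i (2*m) with hlt | hge
    · rcases Nat.eq_zero_or_pos (i % 2) with he | ho
      · right
        refine ⟨i/2, by omega, ?_, Or.inl ⟨hlt, by omega⟩⟩
        have e : i = 2*(i/2) := by omega
        conv_lhs => rw [e]
        exact hwd_even _ (by omega)
      · left
        refine ⟨i/2, by omega, by omega, ?_⟩
        have e : i = 2*(i/2)+1 := by omega
        conv_lhs => rw [e]
        exact hwd_odd _ (by omega)
    · right
      exact ⟨i - m, by omega, hwd_tail i hge, Or.inr ⟨hge, rfl⟩⟩
  have hinjN : ∀ i j, i < n → j < n → wd i = wd j → i = j := by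
    intro i j hi hj heq
    rcases hclass i hi with ⟨a, ha, hia, hva⟩ | ⟨a, ha, hva, hpa⟩ <;>
      rcases hclass j hj with ⟨b, hb, hjb, hvb⟩ | ⟨b, hb, hvb, hpb⟩
    · by_cases hab : a = b
      · omega
      · rw [hva, hvb] at heq
        exact absurd heq (sf_ne hab (by omega) (by omega))
    · rw [hva, hvb] at heq
      have h1 : sf S a ∈ S := sf_mem (by omega)
      have h2 : sf V b ∈ V := sf_mem (by omega)
      rw [hV, Finset.mem_sdiff] at h2
      rw [heq] at h1
      exact absurd h1 h2.2
    · rw [hva, hvb] at heq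
      have h1 : sf S b ∈ S := sf_mem (by omega)
      have h2 : sf V a ∈ V := sf_mem (by omega)
      rw [hV, Finset.mem_sdiff] at h2
      rw [← heq] at h1
      exact absurd h1 h2.2
    · by_cases hab : a = b
      · omega
      · rw [hva, hvb] at heq
        exact absurd heq (sf_ne hab (by omega) (by omega))
  have hmemN : ∀ i, i < n → wd i ∈ X := by
    intro i hi
    rcases hclass i hi with ⟨a, ha, -, hva⟩ | ⟨a, ha, hva, -⟩
    · rw [hva]; exact hsub (sf_mem (by omega))
    · rw [hva]
      have : sf V a ∈ V := sf_mem (by omega)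
      rw [hV, Finset.mem_sdiff] at this
      exact this.1
  have hsurjN : ∀ x, x ∈ X → ∃ i, i < n ∧ wd i = x := by
    intro x hx
    by_cases hxS : x ∈ S
    · obtain ⟨j, hj, hsf⟩ := sf_surj hxS
      refine ⟨2*j+1, by omega, ?_⟩
      rw [hwd_odd _ (by omega)]
      exact hsf
    · have hxV : x ∈ V := by rw [hV, Finset.mem_sdiff]; exact ⟨hx, hxS⟩
      obtain ⟨j, hj, hsf⟩ := sf_surj hxV
      rw [hVcard] at hj
      rcases Nat.lt_or_ge j m with hjm | hjm
      · refine ⟨2*j, by omega, ?_⟩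
        rw [hwd_even _ hjm]
        exact hsf
      · refine ⟨j + m, by omega, ?_⟩
        rw [hwd_tail _ (by omega)]
        have e : j + m - m = j := by omega
        rw [e]
        exact hsf
  refine ⟨fun i => wd i.val, ?_, ?_, ?_, ?_⟩
  · intro i j hij
    exact Fin.ext (hinjN i.1 j.1 i.2 j.2 hij)
  · intro i
    exact hmemN i.1 i.2
  · intro x hx
    obtain ⟨i, hi, hwi⟩ := hsurjN x hx
    exact ⟨⟨i, hi⟩, hwi⟩
  · ext x
    simp only [PinSet, Set.mem_setOf_eq, Finset.coe_sort_coe, Finset.mem_coe]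
    constructor
    · rintro ⟨i, h0, h2, hval, hl, hr⟩
      have hcase : i % 2 = 1 ∧ i < 2*m := by
        by_contra hc
        have : i % 2 = 0 ∨ 2*m ≤ i := by omega
        have := hasc i (by omega) this
        change wd (i+1) < wd i at hr
        omega
      have hj : i / 2 < m := by omega
      have e : i = 2*(i/2)+1 := by omega
      change wd i = x at hval
      have hval2 : wd (2*(i/2)+1) = x := by rw [← e]; exact hval
      rw [hwd_odd _ hj] at hval2
      rw [← hval2]
      exact sf_mem (by omega)
    · intro hx
      obtain ⟨j, hj, hsf⟩ := sf_surj hx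
      refine ⟨2*j+1, by omega, by omega, ?_, ?_, ?_⟩
      · show wd (2*j+1) = x
        rw [hwd_odd _ hj]; exact hsf
      · show wd (2*j+1-1) < wd (2*j+1)
        have e : 2*j+1-1 = 2*j := by omega
        rw [e, hwd_even _ hj, hwd_odd _ hj]
        exact hVS _ hj
      · show wd (2*j+1+1) < wd (2*j+1)
        have e : 2*j+1+1 = 2*j+2 := by omega
        rw [e, hwd_right _ hj, hwd_odd _ hj]
        exact hVS' _ hj


lemma flip_count {X : Finset ℤ} {u : ℤ} (huX : u ∈ X) (hnu : -u ∉ X) (c : ℤ) :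
    ((insert (-u) (X.erase u)).filter (· < c)).card + (if u < c then 1 else 0)
      = (X.filter (· < c)).card + (if -u < c then 1 else 0) := by
  have hne : -u ∉ X.erase u := fun h => hnu (Finset.mem_of_mem_erase h)
  have herase : (X.erase u).filter (· < c) = (X.filter (· < c)).erase u :=
    Finset.filter_erase (· < c) u X
  have hcount_erase : ((X.erase u).filter (· < c)).card + (if u < c then 1 else 0)
      = (X.filter (· < c)).card := by
    rw [herase]
    by_cases h2 : u < c
    · have hm : u ∈ X.filter (· < c) := Finset.mem_filter.2 ⟨huX, h2⟩
      rw [if_pos h2, Finset.card_erase_of_mem hm]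
      have : 0 < (X.filter (· < c)).card := Finset.card_pos.2 ⟨u, hm⟩
      omega
    · have hm : u ∉ X.filter (· < c) := fun h => h2 (Finset.mem_filter.1 h).2
      rw [if_neg h2, Finset.erase_eq_of_notMem hm]
      omega
  rw [Finset.filter_insert]
  by_cases h1 : -u < c
  · have hnotmem : -u ∉ (X.erase u).filter (· < c) := fun h =>
      hne (Finset.mem_filter.1 h).1
    rw [if_pos h1, if_pos h1, Finset.card_insert_of_notMem hnotmem]
    omega
  · rw [if_neg h1, if_neg h1]
    omega

lemma sign_partition {Z : Finset ℤ} (h0 : (0:ℤ) ∉ Z) :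
    Z.card = (Z.filter (· < 0)).card + (Z.filter (0 < ·)).card := by
  have : Z = Z.filter (· < 0) ∪ Z.filter (0 < ·) := by
    ext x
    simp only [Finset.mem_union, Finset.mem_filter]
    constructor
    · intro hx
      rcases lt_trichotomy x 0 with h | h | h
      · exact Or.inl ⟨hx, h⟩
      · exact absurd (h ▸ hx) h0
      · exact Or.inr ⟨hx, h⟩
    · rintro (⟨hx, -⟩ | ⟨hx, -⟩) <;> exact hx
  conv_lhs => rw [this]
  rw [Finset.card_union_of_disjoint]
  rw [Finset.disjoint_left]
  intro x hx1 hx2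
  simp only [Finset.mem_filter] at hx1 hx2
  omega


lemma count_neg_word {n : ℕ} {w : Fin n → ℤ} {Y : Finset ℤ}
    (hinj : Function.Injective w) (hmem : ∀ i, w i ∈ Y) (hsurj : ∀ x ∈ Y, ∃ i, w i = x) :
    (Finset.univ.filter fun i => w i < 0).card = (Y.filter (· < 0)).card := by
  apply Finset.card_nbij (i := w)
  · intro i hi
    simp only [mem_coe, mem_filter, mem_univ, true_and] at hi ⊢
    exact ⟨hmem i, hi⟩
  · intro i _ j _ hij
    exact hinj hij
  · intro x hx
    simp only [coe_filter, Set.mem_setOf_eq] at hx ⊢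
    obtain ⟨i, hi⟩ := hsurj x hx.1
    exact ⟨i, ⟨mem_univ i, by rw [hi]; exact hx.2⟩, hi⟩


end PinAux

open PinAux Finset

theorem stmt14 (k : ℕ) (S : Finset ℤ) (h1 : APSB (2 * k + 1) S)
    (h2 : ¬ APSD (2 * k + 1) S) :
    (S.filter fun x => x < 0).card % 2 = S.card % 2 ∧
    Even (k + (S.filter fun x => x < 0).card) := by
  classical
  set n := 2 * k + 1 with hn
  obtain ⟨w, hsp, hpin⟩ := h1
  have hwinj : Function.Injective w := by
    intro i j hij
    exact hsp.2 (by simp only [hij])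
  set X := Finset.univ.image w with hX
  have hXcard : X.card = n := by
    rw [hX, Finset.card_image_of_injective _ hwinj, card_univ, Fintype.card_fin]
  have habs : ∀ x ∈ X, 1 ≤ |x| ∧ |x| ≤ (n : ℤ) := by
    intro x hx
    obtain ⟨i, -, rfl⟩ := Finset.mem_image.1 hx
    exact hsp.1 i
  have habsinj : ∀ x ∈ X, ∀ y ∈ X, |x| = |y| → x = y := by
    intro x hx y hy hxy
    obtain ⟨i, -, rfl⟩ := Finset.mem_image.1 hx
    obtain ⟨j, -, rfl⟩ := Finset.mem_image.1 hy
    rw [hsp.2 hxy]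
  have h0X : (0:ℤ) ∉ X := by
    intro h
    have := (habs 0 h).1
    simp at this
  have hSsub : S ⊆ X := by
    intro s hs
    have : s ∈ PinSet n w := by rw [hpin]; exact Finset.mem_coe.2 hs
    obtain ⟨i, h0, hi2, hval, -, -⟩ := this
    exact Finset.mem_image.2 ⟨⟨i, by omega⟩, mem_univ _, hval⟩
  have hcritX : ∀ t ∈ S, 2 * (S.filter (· ≤ t)).card ≤ (X.filter (· < t)).card := by
    intro t ht
    exact crit_of_word hwinj hpin ht
  have h0S : (0:ℤ) ∉ S := fun h => h0X (hSsub h)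
  have hXodd : ¬ Even ((X.filter (· < 0)).card) := by
    intro he
    refine h2 ⟨w, hsp, ?_, hpin⟩
    rw [count_neg_word hwinj (fun i => Finset.mem_image.2 ⟨i, mem_univ _, rfl⟩)
      (fun x hx => by obtain ⟨i, -, hi⟩ := Finset.mem_image.1 hx; exact ⟨i, hi⟩)]
    exact he
  -- any valid flipped set must have odd negative count
  have hreal : ∀ Y : Finset ℤ, Y.card = n → (∀ x ∈ Y, 1 ≤ |x| ∧ |x| ≤ (n : ℤ)) →
      (∀ x ∈ Y, ∀ y ∈ Y, |x| = |y| → x = y) → S ⊆ Y → 2 * S.card < n →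
      (∀ t ∈ S, 2 * (S.filter (· ≤ t)).card ≤ (Y.filter (· < t)).card) →
      ¬ Even ((Y.filter (· < 0)).card) := by
    intro Y hc hb hai hsb hlt hcr heven
    obtain ⟨w', hw'inj, hw'mem, hw'surj, hw'pin⟩ := word_of_crit hc hsb hlt hcr
    apply h2
    refine ⟨w', ⟨fun i => hb _ (hw'mem i), fun i j hij => hw'inj (hai _ (hw'mem i) _ (hw'mem j) hij)⟩, ?_, hw'pin⟩
    rw [count_neg_word hw'inj hw'mem (fun x hx => hw'surj x hx)]
    exact heven
  have hSne : S.Nonempty := by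
    rcases S.eq_empty_or_nonempty with hSe | h
    · exfalso
      set Y := X.image (fun x => |x|) with hY
      have hYcard : Y.card = n := by
        rw [hY, Finset.card_image_of_injOn (fun x hx y hy hxy => habsinj x hx y hy hxy), hXcard]
      have hYb : ∀ y ∈ Y, 1 ≤ |y| ∧ |y| ≤ (n:ℤ) := by
        intro y hy
        obtain ⟨x, hx, rfl⟩ := Finset.mem_image.1 hy
        rw [abs_abs]
        exact habs x hx
      have hYai : ∀ x ∈ Y, ∀ y ∈ Y, |x| = |y| → x = y := by
        intro x hx y hy hxy
        obtain ⟨x', hx', rfl⟩ := Finset.mem_image.1 hx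
        obtain ⟨y', hy', rfl⟩ := Finset.mem_image.1 hy
        rw [abs_abs, abs_abs] at hxy
        exact hxy
      have hYneg : Y.filter (· < 0) = ∅ := by
        rw [Finset.filter_eq_empty_iff]
        intro y hy
        obtain ⟨x, hx, rfl⟩ := Finset.mem_image.1 hy
        simp only [not_lt]
        exact abs_nonneg x
      refine hreal Y hYcard hYb hYai ?_ ?_ ?_ ?_
      · rw [hSe]; exact Finset.empty_subset _
      · rw [hSe]; simp only [Finset.card_empty]; omega
      · intro t ht; rw [hSe] at ht; simp at ht
      · rw [hYneg]; simp
    · exact h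
  set m := S.card with hm
  have hmlt : 2 * m < n := by
    set t0 := S.max' hSne with ht0
    have hfeq : S.filter (· ≤ t0) = S :=
      Finset.filter_eq_self.2 (fun x hx => S.le_max' x hx)
    have h1 := hcritX t0 (S.max'_mem hSne)
    rw [hfeq] at h1
    have hsubm : X.filter (· < t0) ⊆ X.erase t0 := by
      intro x hx
      simp only [mem_filter] at hx
      exact Finset.mem_erase.2 ⟨ne_of_lt hx.2, hx.1⟩
    have h2' := Finset.card_le_card hsubm
    rw [Finset.card_erase_of_mem (hSsub (S.max'_mem hSne)), hXcard] at h2'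
    omega
  have hmk : m ≤ k := by omega
  have hpos : ∀ q ∈ X, 0 < q → q ∈ S := by
    intro q hqX hq0
    by_contra hqS
    have hnq : -q ∉ X := by
      intro h
      have := habsinj _ h _ hqX (by rw [abs_neg])
      omega
    set Y := insert (-q) (X.erase q) with hY
    have hYcard : Y.card = n := by
      rw [hY, Finset.card_insert_of_notMem (fun h => hnq (Finset.mem_of_mem_erase h)),
        Finset.card_erase_of_mem hqX, hXcard]
      omega
    have hYmemiff : ∀ y, y ∈ Y ↔ (y = -q ∨ (y ∈ X ∧ y ≠ q)) := by
      intro y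
      rw [hY]
      simp only [Finset.mem_insert, Finset.mem_erase]
      tauto
    have hYb : ∀ x ∈ Y, 1 ≤ |x| ∧ |x| ≤ (n:ℤ) := by
      intro x hx
      rcases (hYmemiff x).1 hx with rfl | ⟨hxX, -⟩
      · rw [abs_neg]; exact habs q hqX
      · exact habs x hxX
    have hYai : ∀ x ∈ Y, ∀ y ∈ Y, |x| = |y| → x = y := by
      intro x hx y hy hxy
      rcases (hYmemiff x).1 hx with rfl | ⟨hxX, hxq⟩ <;>
        rcases (hYmemiff y).1 hy with rfl | ⟨hyX, hyq⟩
      · rfl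
      · exfalso
        rw [abs_neg] at hxy
        exact hyq (habsinj _ hyX _ hqX hxy.symm)
      · exfalso
        rw [abs_neg] at hxy
        exact hxq (habsinj _ hxX _ hqX hxy)
      · exact habsinj _ hxX _ hyX hxy
    have hYS : S ⊆ Y := fun s hs =>
      (hYmemiff s).2 (Or.inr ⟨hSsub hs, fun h => hqS (h ▸ hs)⟩)
    have hYcrit : ∀ t ∈ S, 2 * (S.filter (· ≤ t)).card ≤ (Y.filter (· < t)).card := by
      intro t ht
      have hf := flip_count hqX hnq t
      have hc := hcritX t ht
      have hmono : (if q < t then (1:ℕ) else 0) ≤ (if -q < t then (1:ℕ) else 0) := by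
        split_ifs with hh1 hh2 <;> omega
      rw [← hY] at hf
      omega
    have hflip0 := flip_count hqX hnq 0
    rw [← hY, if_neg (by omega), if_pos (by omega)] at hflip0
    refine hreal Y hYcard hYb hYai hYS hmlt hYcrit ?_
    have hx0 : (X.filter (· < 0)).card % 2 = 1 := Nat.not_even_iff.1 hXodd
    refine Nat.even_iff.2 ?_
    omega
  set a := (S.filter (· < 0)).card with ha
  set bS := (S.filter (0 < ·)).card with hbS
  have hXpos_eq : X.filter (0 < ·) = S.filter (0 < ·) := by
    apply Finset.Subset.antisymm
    · intro x hx
      simp only [mem_filter] at hx ⊢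
      exact ⟨hpos x hx.1 hx.2, hx.2⟩
    · intro x hx
      simp only [mem_filter] at hx ⊢
      exact ⟨hSsub hx.1, hx.2⟩
  have hXsign : n = (X.filter (· < 0)).card + bS := by
    have := sign_partition h0X
    rw [hXcard, hXpos_eq] at this
    exact this
  have hSsign : m = a + bS := sign_partition h0S
  have hkm : k ≤ m := by
    by_contra hlt'
    push_neg at hlt'
    set TS := S.filter (fun t => (X.filter (· < t)).card ≤ 2 * (S.filter (· ≤ t)).card) with hTS
    have hTneg : ∀ t ∈ TS, t < 0 := by
      intro t ht
      simp only [hTS, mem_filter] at ht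
      obtain ⟨htS, htight⟩ := ht
      by_contra hge
      push_neg at hge
      have ht0 : 0 < t := by
        rcases eq_or_lt_of_le hge with h | h
        · exact absurd (h ▸ htS) h0S
        · exact h
      set c' := (S.filter (fun x => 0 < x ∧ x < t)).card with hc'
      have hXf : (X.filter (· < t)).card = (X.filter (· < 0)).card + c' := by
        have hXsplit : X.filter (· < t)
            = X.filter (· < 0) ∪ X.filter (fun x => 0 < x ∧ x < t) := by
          ext x
          simp only [mem_union, mem_filter]
          constructor
          · rintro ⟨hx, hxt⟩
            rcases lt_trichotomy x 0 with h | h | h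
            · exact Or.inl ⟨hx, h⟩
            · exact absurd (h ▸ hx) h0X
            · exact Or.inr ⟨hx, h, hxt⟩
          · rintro (⟨hx, h⟩ | ⟨hx, -, h⟩)
            · exact ⟨hx, lt_trans h ht0⟩
            · exact ⟨hx, h⟩
        have hdisj : Disjoint (X.filter (· < 0)) (X.filter (fun x => 0 < x ∧ x < t)) := by
          rw [Finset.disjoint_left]
          intro x hx1 hx2
          simp only [mem_filter] at hx1 hx2
          omega
        have hXpos2 : X.filter (fun x => 0 < x ∧ x < t)
            = S.filter (fun x => 0 < x ∧ x < t) := by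
          have e1 : X.filter (fun x => 0 < x ∧ x < t) = (X.filter (0 < ·)).filter (· < t) := by
            rw [Finset.filter_filter]
          have e2 : S.filter (fun x => 0 < x ∧ x < t) = (S.filter (0 < ·)).filter (· < t) := by
            rw [Finset.filter_filter]
          rw [e1, e2, hXpos_eq]
        rw [hXsplit, card_union_of_disjoint hdisj, hXpos2]
      have hSf : (S.filter (· ≤ t)).card ≤ a + c' + 1 := by
        have hsub2 : S.filter (· ≤ t)
            ⊆ (S.filter (· < 0) ∪ S.filter (fun x => 0 < x ∧ x < t)) ∪ {t} := by
          intro x hx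
          simp only [mem_filter, mem_union, mem_singleton] at hx ⊢
          obtain ⟨hxS, hxt⟩ := hx
          rcases lt_trichotomy x 0 with h | h | h
          · exact Or.inl (Or.inl ⟨hxS, h⟩)
          · exact absurd (h ▸ hxS) h0S
          · rcases eq_or_lt_of_le hxt with h' | h'
            · exact Or.inr h'
            · exact Or.inl (Or.inr ⟨hxS, h, h'⟩)
        have h1 := Finset.card_le_card hsub2
        have h2' := Finset.card_union_le
          (S.filter (· < 0) ∪ S.filter (fun x => 0 < x ∧ x < t)) ({t} : Finset ℤ)
        have h3 := Finset.card_union_le (S.filter (· < 0)) (S.filter (fun x => 0 < x ∧ x < t))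
        simp only [Finset.card_singleton] at h2'
        omega
      have hc'b : c' + 1 ≤ bS := by
        have hsub3 : S.filter (fun x => 0 < x ∧ x < t) ⊆ (S.filter (0 < ·)).erase t := by
          intro x hx
          simp only [mem_filter] at hx
          exact Finset.mem_erase.2 ⟨ne_of_lt hx.2.2, mem_filter.2 ⟨hx.1, hx.2.1⟩⟩
        have htb : t ∈ S.filter (0 < ·) := mem_filter.2 ⟨htS, ht0⟩
        have h4 := Finset.card_le_card hsub3
        rw [Finset.card_erase_of_mem htb] at h4
        have hbpos : 0 < bS := Finset.card_pos.2 ⟨t, htb⟩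
        omega
      omega
    have hu : ∃ u, u ∈ X ∧ u < 0 ∧ u ∉ S ∧ ∀ t ∈ TS, t < u := by
      rcases TS.eq_empty_or_nonempty with hTSe | hTSne
      · have hsize := Finset.card_le_card_sdiff_add_card (s := X.filter (· < 0)) (t := S)
        have hSneg : (S.filter (· < 0)).card ≤ S.card := Finset.card_filter_le _ _
        have hcard : 0 < ((X.filter (· < 0)) \ S).card := by omega
        obtain ⟨u, hu⟩ := Finset.card_pos.1 hcard
        rw [Finset.mem_sdiff, mem_filter] at hu
        exact ⟨u, hu.1.1, hu.1.2, hu.2, fun t ht => by rw [hTSe] at ht; simp at ht⟩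
      · set t0 := TS.max' hTSne with ht0'
        have ht0mem : t0 ∈ TS := TS.max'_mem hTSne
        have ht0S : t0 ∈ S := by
          have := ht0mem
          simp only [hTS, mem_filter] at this
          exact this.1
        have ht0tight : (X.filter (· < t0)).card ≤ 2 * (S.filter (· ≤ t0)).card := by
          have := ht0mem
          simp only [hTS, mem_filter] at this
          exact this.2
        have ht0neg : t0 < 0 := hTneg t0 ht0mem
        set A := X.filter (fun x => t0 < x ∧ x < 0) with hA
        have hXnegsplit : X.filter (· < 0) = (X.filter (· < t0) ∪ {t0}) ∪ A := by
          ext x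
          simp only [hA, mem_union, mem_filter, mem_singleton]
          constructor
          · rintro ⟨hx, hx0⟩
            rcases lt_trichotomy x t0 with h | h | h
            · exact Or.inl (Or.inl ⟨hx, h⟩)
            · exact Or.inl (Or.inr h)
            · exact Or.inr ⟨hx, h, hx0⟩
          · rintro ((⟨hx, h⟩ | rfl) | ⟨hx, -, h⟩)
            · exact ⟨hx, lt_trans h ht0neg⟩
            · exact ⟨hSsub ht0S, ht0neg⟩
            · exact ⟨hx, h⟩
        have hd1 : Disjoint (X.filter (· < t0)) ({t0} : Finset ℤ) := by
          rw [Finset.disjoint_left]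
          intro x hx1 hx2
          simp only [mem_filter] at hx1
          simp only [mem_singleton] at hx2
          omega
        have hd2 : Disjoint (X.filter (· < t0) ∪ {t0}) A := by
          rw [Finset.disjoint_left]
          intro x hx1 hx2
          simp only [hA, mem_filter] at hx2
          simp only [mem_union, mem_filter, mem_singleton] at hx1
          rcases hx1 with ⟨-, h⟩ | h <;> omega
        have hcards : (X.filter (· < 0)).card = (X.filter (· < t0)).card + 1 + A.card := by
          rw [hXnegsplit, card_union_of_disjoint hd2, card_union_of_disjoint hd1,
            card_singleton]
        have hSA : (S.filter (· ≤ t0)).card + (S.filter (fun x => t0 < x ∧ x < 0)).card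
            = a := by
          have hsplit : S.filter (· < 0)
              = S.filter (· ≤ t0) ∪ S.filter (fun x => t0 < x ∧ x < 0) := by
            ext x
            simp only [mem_union, mem_filter]
            constructor
            · rintro ⟨hx, hx0⟩
              rcases le_or_gt x t0 with h | h
              · exact Or.inl ⟨hx, h⟩
              · exact Or.inr ⟨hx, h, hx0⟩
            · rintro (⟨hx, h⟩ | ⟨hx, -, h⟩)
              · exact ⟨hx, lt_of_le_of_lt h ht0neg⟩
              · exact ⟨hx, h⟩
          have hdisj' : Disjoint (S.filter (· ≤ t0)) (S.filter (fun x => t0 < x ∧ x < 0)) := by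
            rw [Finset.disjoint_left]
            intro x hx1 hx2
            simp only [mem_filter] at hx1 hx2
            omega
          rw [ha, hsplit, card_union_of_disjoint hdisj']
        have hAS : A.card ≤ (A \ S).card + (S.filter (fun x => t0 < x ∧ x < 0)).card := by
          have hss : A ⊆ (A \ S) ∪ S.filter (fun x => t0 < x ∧ x < 0) := by
            intro x hx
            by_cases hxS : x ∈ S
            · apply Finset.mem_union_right
              simp only [hA, mem_filter] at hx
              exact mem_filter.2 ⟨hxS, hx.2⟩
            · exact Finset.mem_union_left _ (Finset.mem_sdiff.2 ⟨hx, hxS⟩)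
          have := Finset.card_le_card hss
          have h5 := Finset.card_union_le (A \ S) (S.filter (fun x => t0 < x ∧ x < 0))
          omega
        have hra : (S.filter (· ≤ t0)).card ≤ a := by
          apply Finset.card_le_card
          intro x hx
          simp only [mem_filter] at hx ⊢
          exact ⟨hx.1, lt_of_le_of_lt hx.2 ht0neg⟩
        have hApos : 0 < (A \ S).card := by omega
        obtain ⟨u, hu⟩ := Finset.card_pos.1 hApos
        rw [Finset.mem_sdiff] at hu
        have huA := hu.1
        simp only [hA, mem_filter] at huA
        exact ⟨u, huA.1, huA.2.2, hu.2,
          fun t ht => lt_of_le_of_lt (TS.le_max' t ht) huA.2.1⟩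
    obtain ⟨u, huX, hu0, huS, hub⟩ := hu
    have hnu : -u ∉ X := by
      intro h
      have := habsinj _ h _ huX (by rw [abs_neg])
      omega
    set Y := insert (-u) (X.erase u) with hY
    have hYcard : Y.card = n := by
      rw [hY, Finset.card_insert_of_notMem (fun h => hnu (Finset.mem_of_mem_erase h)),
        Finset.card_erase_of_mem huX, hXcard]
      omega
    have hYmemiff : ∀ y, y ∈ Y ↔ (y = -u ∨ (y ∈ X ∧ y ≠ u)) := by
      intro y
      rw [hY]
      simp only [Finset.mem_insert, Finset.mem_erase]
      tauto
    have hYb : ∀ x ∈ Y, 1 ≤ |x| ∧ |x| ≤ (n:ℤ) := by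
      intro x hx
      rcases (hYmemiff x).1 hx with rfl | ⟨hxX, -⟩
      · rw [abs_neg]; exact habs u huX
      · exact habs x hxX
    have hYai : ∀ x ∈ Y, ∀ y ∈ Y, |x| = |y| → x = y := by
      intro x hx y hy hxy
      rcases (hYmemiff x).1 hx with rfl | ⟨hxX, hxq⟩ <;>
        rcases (hYmemiff y).1 hy with rfl | ⟨hyX, hyq⟩
      · rfl
      · exfalso
        rw [abs_neg] at hxy
        exact hyq (habsinj _ hyX _ huX hxy.symm)
      · exfalso
        rw [abs_neg] at hxy
        exact hxq (habsinj _ hxX _ huX hxy)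
      · exact habsinj _ hxX _ hyX hxy
    have hYS : S ⊆ Y := fun s hs =>
      (hYmemiff s).2 (Or.inr ⟨hSsub hs, fun h => huS (h ▸ hs)⟩)
    have hYcrit : ∀ t ∈ S, 2 * (S.filter (· ≤ t)).card ≤ (Y.filter (· < t)).card := by
      intro t ht
      have hf := flip_count huX hnu t
      rw [← hY] at hf
      have hc := hcritX t ht
      by_cases hc1 : u < t
      · by_cases hc2 : -u < t
        · rw [if_pos hc1, if_pos hc2] at hf
          omega
        · have htight : ¬ ((X.filter (· < t)).card ≤ 2 * (S.filter (· ≤ t)).card) := by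
            intro hti
            have htTS : t ∈ TS := by
              simp only [hTS, mem_filter]
              exact ⟨ht, hti⟩
            have := hub t htTS
            omega
          rw [if_pos hc1, if_neg hc2] at hf
          omega
      · rw [if_neg hc1] at hf
        by_cases hc2 : -u < t
        · rw [if_pos hc2] at hf; omega
        · rw [if_neg hc2] at hf; omega
    have hflip0 := flip_count huX hnu 0
    rw [← hY, if_pos (by omega : u < (0:ℤ)), if_neg (by omega : ¬ -u < (0:ℤ))] at hflip0
    refine hreal Y hYcard hYb hYai hYS hmlt hYcrit ?_
    have hx0 : (X.filter (· < 0)).card % 2 = 1 := Nat.not_even_iff.1 hXodd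
    refine Nat.even_iff.2 ?_
    omega
  -- conclusion
  have hX0 : (X.filter (· < 0)).card % 2 = 1 := Nat.not_even_iff.1 hXodd
  have hfin1 : (S.filter fun x => x < 0).card = a := rfl
  have hfin2 : S.card = m := rfl
  constructor
  · omega
  · have : (k + a) % 2 = 0 := by omega
    exact Nat.even_iff.2 this
end

section
/- For k ≥ 0, the number of all-positive sets that are admissible pinnacle sets of the hyperoctahedral group B_{2k+1} but are not admissible pinnacle sets of the symmetric group S_{2k+1} equals 4^k − C(2k, k). -/
open Finset


def Psum (n m : ℕ) : ℕ := ∑ j ∈ range m, n.choose j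

def Gfun : ℕ → ℤ → ℕ
  | 0, _ => 1
  | (n+1), c => Gfun n (c-1) + if c ≤ -1 then Gfun n (c+1) else 0

lemma psum_pascal (n m : ℕ) : Psum (n+1) (m+1) = Psum n (m+1) + Psum n m := by
  induction m with
  | zero => simp [Psum]
  | succ m ih =>
      have h1 : Psum (n+1) (m+1+1) = Psum (n+1) (m+1) + (n+1).choose (m+1) := by
        simp [Psum, Finset.sum_range_succ]
      have h2 : Psum n (m+1+1) = Psum n (m+1) + n.choose (m+1) := by
        simp [Psum, Finset.sum_range_succ]
      have h3 : Psum n (m+1) = Psum n m + n.choose m := by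
        simp [Psum, Finset.sum_range_succ]
      rw [h1, ih, h2, h3, Nat.choose_succ_succ]
      ring

lemma psum_mono (n : ℕ) {m m' : ℕ} (h : m ≤ m') : Psum n m ≤ Psum n m' :=
  Finset.sum_le_sum_of_subset (Finset.range_subset_range.2 h)

lemma gfun_closed : ∀ n (h : ℕ), Even (n + h) →
    Gfun n (-(h:ℤ)) = Psum n ((n+h)/2 + 1) - Psum n ((n-h)/2) := by
  intro n
  induction n with
  | zero =>
      intro h he
      have h0 : Psum 0 (h/2+1) = 1 := by
        unfold Psum
        rw [Finset.sum_eq_single 0]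
        · simp
        · intro b _ hb; exact Nat.choose_eq_zero_of_lt (by omega)
        · simp
      have h2 : (0-h)/2 = 0 := by omega
      have h3 : (0+h)/2 + 1 = h/2+1 := by omega
      simp only [Gfun, h2, h3, Psum, Finset.range_zero, Finset.sum_empty]
      simp only [Psum] at h0
      omega
  | succ n ih =>
      intro h he
      have hpar : (n + 1 + h) % 2 = 0 := Nat.even_iff.1 he
      have hGstep : Gfun (n+1) (-(h:ℤ)) =
          Gfun n (-(h:ℤ)-1) + if -(h:ℤ) ≤ -1 then Gfun n (-(h:ℤ)+1) else 0 := rfl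
      rcases Nat.eq_zero_or_pos h with rfl | hpos
      · -- h = 0, n odd
        have hn : n % 2 = 1 := by omega
        have ih1 := ih 1 (by rw [Nat.even_iff]; omega)
        have hGe : Gfun (n+1) (-((0:ℕ):ℤ)) = Gfun n (-((1:ℕ):ℤ)) := by
          rw [hGstep]
          norm_num
        rw [hGe, ih1]
        have e6 : ((n+1+0)/2 + 1) = (n+1)/2+1 := by omega
        have e7 : ((n+1-0)/2) = (n+1)/2 := by omega
        rw [e6, e7]
        have hA' : Psum (n+1) ((n+1)/2+1) = Psum n ((n+1)/2+1) + Psum n ((n+1)/2) := by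
          rw [psum_pascal]
        have hB' : Psum (n+1) ((n+1)/2) = Psum n ((n+1)/2) + Psum n ((n-1)/2) := by
          have e : (n+1)/2 = (n-1)/2 + 1 := by omega
          rw [e, psum_pascal]
        have m1 : Psum n ((n-1)/2) ≤ Psum n ((n+1)/2+1) := psum_mono n (by omega)
        omega
      · -- h ≥ 1
        have ih1 := ih (h+1) (by rw [Nat.even_iff] at he ⊢; omega)
        have ih2 := ih (h-1) (by rw [Nat.even_iff] at he ⊢; omega)
        have hc1 : -(h:ℤ)-1 = -((h+1:ℕ):ℤ) := by push_cast; ring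
        have hc2 : -(h:ℤ)+1 = -((h-1:ℕ):ℤ) := by
          have : ((h-1:ℕ):ℤ) = (h:ℤ) - 1 := by omega
          rw [this]; ring
        have hstep : Gfun (n+1) (-(h:ℤ)) = Gfun n (-((h+1:ℕ):ℤ)) + Gfun n (-((h-1:ℕ):ℤ)) := by
          rw [hGstep, if_pos (by omega : -(h:ℤ) ≤ -1), hc1, hc2]
        rw [hstep, ih1, ih2]
        -- index bookkeeping
        have hne : h ≠ n := by omega  -- parity
        have eu : (n+1+h)/2 + 1 = ((n+(h-1))/2 + 1) + 1 := by omega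
        have eu1 : (n+(h+1))/2 + 1 = (n+1+h)/2 + 1 := by omega
        have E1 : Psum (n+1) ((n+1+h)/2+1)
            = Psum n ((n+(h+1))/2 + 1) + Psum n ((n+(h-1))/2 + 1) := by
          rw [eu, psum_pascal, ← eu, eu1]
        have E2 : Psum (n+1) ((n+1-h)/2)
            = Psum n ((n-(h-1))/2) + Psum n ((n-(h+1))/2) := by
          rcases le_or_gt h n with hle | hgt
          · -- h ≤ n-1 since h ≠ n
            have ev : (n+1-h)/2 = ((n-(h+1))/2) + 1 := by omega
            rw [ev, psum_pascal]
            have e4 : (n-(h+1))/2 + 1 = (n-(h-1))/2 := by omega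
            rw [e4]
          · have e1 : (n+1-h)/2 = 0 := by omega
            have e2 : (n-(h-1))/2 = 0 := by omega
            have e3 : (n-(h+1))/2 = 0 := by omega
            rw [e1, e2, e3]
            simp [Psum]
        rw [E1, E2]
        have m1 : Psum n ((n-(h+1))/2) ≤ Psum n ((n+(h+1))/2 + 1) := psum_mono n (by omega)
        have m2 : Psum n ((n-(h-1))/2) ≤ Psum n ((n+(h-1))/2 + 1) := psum_mono n (by omega)
        omega



lemma countR : ∀ (m : ℕ) (a c : ℤ),
    ((Icc a (a + (m:ℤ) - 1)).powerset.filter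
      (fun S => ∀ s ∈ S, 2*((S.filter (fun x => x ≤ s)).card : ℤ) + c ≤ s - a + 1)).card
    = Gfun m c := by
  intro m
  induction m with
  | zero =>
      intro a c
      have h0 : Icc a (a + ((0:ℕ):ℤ) - 1) = ∅ := Finset.Icc_eq_empty (by push_cast; omega)
      rw [h0]
      rw [show ((∅ : Finset ℤ).powerset) = {∅} by rfl, Finset.filter_singleton,
        if_pos (by simp)]
      simp [Gfun]
  | succ m ih =>
      intro a c
      have hins : Icc a (a + ((m+1:ℕ):ℤ) - 1) = insert a (Icc (a+1) (a + (m:ℤ))) := by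
        ext x; simp; push_cast; omega
      have hanotin : a ∉ Icc (a+1) (a + (m:ℤ)) := by simp
      have hIcc : Icc (a+1) ((a+1) + (m:ℤ) - 1) = Icc (a+1) (a + (m:ℤ)) := by
        congr 1; ring
      rw [hins, Finset.powerset_insert, Finset.filter_union]
      rw [Finset.card_union_of_disjoint]
      · have hGstep : Gfun (m+1) c = Gfun m (c-1) + if c ≤ -1 then Gfun m (c+1) else 0 := rfl
        rw [hGstep]
        congr 1
        · -- part without a
          have hih := ih (a+1) (c-1)
          rw [hIcc] at hih
          rw [← hih]
          refine congrArg Finset.card (Finset.filter_congr ?_)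
          intro S hS
          simp only [Finset.mem_powerset] at hS
          constructor <;> intro hP s hs <;>
            [skip; skip] <;>
            · have h2 := hP s hs
              have hmem := hS hs
              simp only [Finset.mem_Icc] at hmem
              omega
        · -- part with a
          rw [Finset.filter_image]
          rw [Finset.card_image_of_injOn (by
            intro S1 h1 S2 h2 heq
            simp only [Finset.coe_filter, Set.mem_setOf_eq, Finset.mem_powerset] at h1 h2
            have h1' : a ∉ S1 := fun h => hanotin (h1.1 h)
            have h2' : a ∉ S2 := fun h => hanotin (h2.1 h)
            have := congrArg (fun (X : Finset ℤ) => X.erase a) heq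
            simpa [Finset.erase_insert h1', Finset.erase_insert h2'] using this)]
          by_cases hc : c ≤ -1
          · have hih := ih (a+1) (c+1)
            rw [hIcc] at hih
            rw [if_pos hc, ← hih]
            refine congrArg Finset.card (Finset.filter_congr ?_)
            intro S hS
            simp only [Finset.mem_powerset] at hS
            have haS : a ∉ S := fun h => hanotin (hS h)
            have key : ∀ s ∈ S, ((insert a S).filter (fun x => x ≤ s)).card
                = (S.filter (fun x => x ≤ s)).card + 1 := by
              intro s hs
              have hsa := hS hs
              simp only [Finset.mem_Icc] at hsa
              rw [Finset.filter_insert, if_pos (by omega),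
                Finset.card_insert_of_notMem (fun hmem => haS (Finset.mem_of_mem_filter a hmem))]
            have hfa : ((insert a S).filter (fun x => x ≤ a)) = {a} := by
              rw [Finset.filter_insert, if_pos le_rfl]
              have he : S.filter (fun x => x ≤ a) = ∅ := by
                apply Finset.filter_eq_empty_iff.2
                intro x hx
                have := hS hx; simp only [Finset.mem_Icc] at this; omega
              rw [he]
              rfl
            constructor
            · intro hP s hs
              have h2 := hP s (Finset.mem_insert_of_mem hs)
              rw [key s hs] at h2
              have hsa := hS hs
              simp only [Finset.mem_Icc] at hsa
              push_cast at h2 ⊢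
              omega
            · intro hP s hs
              rcases Finset.mem_insert.1 hs with rfl | hs'
              · rw [hfa]
                simp only [Finset.card_singleton]
                omega
              · have h2 := hP s hs'
                rw [key s hs']
                have hsa := hS hs'
                simp only [Finset.mem_Icc] at hsa
                push_cast at h2 ⊢
                omega
          · rw [if_neg hc, Finset.card_eq_zero, Finset.filter_eq_empty_iff]
            intro S hS hP
            simp only [Finset.mem_powerset] at hS
            have h2 := hP a (Finset.mem_insert_self a S)
            have hfa : ((insert a S).filter (fun x => x ≤ a)) = {a} := by
              rw [Finset.filter_insert, if_pos le_rfl]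
              have he : S.filter (fun x => x ≤ a) = ∅ := by
                apply Finset.filter_eq_empty_iff.2
                intro x hx
                have := hS hx; simp only [Finset.mem_Icc] at this; omega
              rw [he]
              rfl
            rw [hfa] at h2
            simp only [Finset.card_singleton] at h2
            omega
      · apply Finset.disjoint_filter_filter
        rw [Finset.disjoint_left]
        intro S hS1 hS2
        simp only [Finset.mem_powerset] at hS1
        simp only [Finset.mem_image, Finset.mem_powerset] at hS2
        obtain ⟨S', _, rfl⟩ := hS2
        exact hanotin (hS1 (Finset.mem_insert_self a S'))

/-- total version of `w` -/
def wAt (n : ℕ) (w : Fin n → ℤ) : ℕ → ℤ := fun i => if h : i < n then w ⟨i, h⟩ else 0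

lemma wAt_eq (n : ℕ) (w : Fin n → ℤ) (i : ℕ) (h : i < n) : wAt n w i = w ⟨i, h⟩ := dif_pos h

/-- pinnacle position predicate -/
def PinPred (n : ℕ) (w : Fin n → ℤ) (i : ℕ) : Prop :=
  0 < i ∧ i + 1 < n ∧ wAt n w (i-1) < wAt n w i ∧ wAt n w (i+1) < wAt n w i

instance (n : ℕ) (w : Fin n → ℤ) : DecidablePred (PinPred n w) := by
  intro i; unfold PinPred; infer_instance

lemma mem_pinSet_iff (n : ℕ) (w : Fin n → ℤ) (x : ℤ) :
    x ∈ PinSet n w ↔ ∃ i, PinPred n w i ∧ wAt n w i = x := by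
  constructor
  · rintro ⟨i, h0, h2, rfl, hl, hr⟩
    refine ⟨i, ⟨h0, h2, ?_, ?_⟩, ?_⟩ <;>
      simp only [wAt_eq n w i (by omega), wAt_eq n w (i-1) (by omega),
        wAt_eq n w (i+1) (by omega)] <;> first
      | exact hl
      | exact hr
      | rfl
  · rintro ⟨i, ⟨h0, h2, hl, hr⟩, rfl⟩
    refine ⟨i, h0, h2, ?_, ?_, ?_⟩ <;>
      simp only [wAt_eq n w i (by omega), wAt_eq n w (i-1) (by omega),
        wAt_eq n w (i+1) (by omega)] at hl hr ⊢ <;> first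
      | exact hl
      | exact hr
      | rfl

/-- the finset of pinnacle positions -/
def PinPos (n : ℕ) (w : Fin n → ℤ) : Finset ℕ := (range n).filter (PinPred n w)

lemma nonadj (n : ℕ) (w : Fin n → ℤ) {i j : ℕ} (hi : PinPred n w i) (hj : PinPred n w j)
    (hij : i = j + 1) : False := by
  obtain ⟨h0, h2, hl, _⟩ := hi
  obtain ⟨h0', h2', _, hr'⟩ := hj
  subst hij
  simp only [Nat.add_sub_cancel] at hl
  omega

/-- pinnacle positions with value bounded -/
lemma pinpos_card (n : ℕ) (w : Fin n → ℤ) (P : Finset ℕ) (hP : ∀ i ∈ P, PinPred n w i) :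
    2 * P.card ≤ n - 1 := by
  rcases Nat.eq_zero_or_pos n with rfl | hn
  · have : P = ∅ := by
      rw [Finset.eq_empty_iff_forall_notMem]
      intro i hi; have := hP i hi; obtain ⟨_, h2, _, _⟩ := this; omega
    simp [this]
  have hdisj : Disjoint P (P.image (· + 1)) := by
    rw [Finset.disjoint_left]
    intro i hiP hiI
    obtain ⟨j, hjP, hji⟩ := Finset.mem_image.1 hiI
    exact nonadj n w (hP i hiP) (hP j hjP) hji.symm
  have hcard : (P ∪ P.image (· + 1)).card = 2 * P.card := by
    rw [Finset.card_union_of_disjoint hdisj,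
      Finset.card_image_of_injective _ (add_left_injective 1)]
    ring
  have hsub : P ∪ P.image (· + 1) ⊆ Finset.Icc 1 (n-1) := by
    intro i hi
    rcases Finset.mem_union.1 hi with h | h
    · have := hP i h; obtain ⟨h0, h2, _, _⟩ := this
      simp only [Finset.mem_Icc]; omega
    · obtain ⟨j, hjP, rfl⟩ := Finset.mem_image.1 h
      have := hP j hjP; obtain ⟨h0, h2, _, _⟩ := this
      simp only [Finset.mem_Icc]; omega
  have := Finset.card_le_card hsub
  rw [hcard, Nat.card_Icc] at this
  omega

/-- Values of a positive signed permutation are ≥ 1 -/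
lemma pos_val {n : ℕ} {w : Fin n → ℤ} (hsp : IsSignedPerm n w) (hpos : ∀ i, 0 < w i)
    (i : Fin n) : 1 ≤ w i ∧ w i ≤ n := by
  have h := hsp.1 i
  rw [abs_of_pos (hpos i)] at h
  exact h

/-- L2 : necessity for type A -/
lemma apsa_necessary {n : ℕ} {S : Finset ℤ} (h : APSA n S) :
    (↑S ⊆ Set.Icc (1:ℤ) n) ∧ ∀ s ∈ S, 2 * ((S.filter (fun x => x ≤ s)).card : ℤ) < s := by
  obtain ⟨w, hsp, hpos, hpin⟩ := h
  have hw : ∀ i : Fin n, 1 ≤ w i ∧ w i ≤ n := pos_val hsp hpos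
  have hwinj : Function.Injective w := by
    intro i j hij
    apply hsp.2
    simp only [abs_of_pos (hpos i), abs_of_pos (hpos j), hij]
  have hmem : ∀ x, x ∈ S ↔ ∃ i, PinPred n w i ∧ wAt n w i = x := by
    intro x
    rw [← mem_pinSet_iff, hpin]; simp
  constructor
  · intro x hx
    obtain ⟨i, hi, hix⟩ := (hmem x).1 hx
    obtain ⟨h0, h2, _, _⟩ := hi
    rw [wAt_eq n w i (by omega)] at hix
    have := hw ⟨i, by omega⟩
    simp only [Set.mem_Icc]
    omega
  · intro s hs
    -- P : pinnacle positions with value ≤ s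
    set P : Finset ℕ := (range n).filter (fun i => PinPred n w i ∧ wAt n w i ≤ s) with hPdef
    have hPmem : ∀ i ∈ P, PinPred n w i ∧ wAt n w i ≤ s ∧ i < n := by
      intro i hi
      simp only [hPdef, Finset.mem_filter, Finset.mem_range] at hi
      tauto
    -- S.filter (≤ s) is the image of P under wAt
    have himg : S.filter (fun x => x ≤ s) = P.image (wAt n w) := by
      ext x
      simp only [Finset.mem_filter, Finset.mem_image]
      constructor
      · rintro ⟨hxS, hxs⟩
        obtain ⟨i, hi, hix⟩ := (hmem x).1 hxS
        refine ⟨i, ?_, hix⟩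
        have h2 := hi.2.1
        simp only [hPdef, Finset.mem_filter, Finset.mem_range]
        exact ⟨by omega, hi, by rw [hix]; exact hxs⟩
      · rintro ⟨i, hiP, hix⟩
        obtain ⟨hi, hvs, _⟩ := hPmem i hiP
        exact ⟨(hmem x).2 ⟨i, hi, hix⟩, hix ▸ hvs⟩
    have hwlow : ∀ i, i < n → 1 ≤ wAt n w i ∧ wAt n w i ≤ n := by
      intro i hi
      rw [wAt_eq n w i hi]
      exact hw ⟨i, hi⟩
    have hwAtinj : ∀ i j, i < n → j < n → wAt n w i = wAt n w j → i = j := by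
      intro i j hi hj hij
      rw [wAt_eq n w i hi, wAt_eq n w j hj] at hij
      exact congrArg Fin.val (hwinj hij)
    have hcard : (S.filter (fun x => x ≤ s)).card = P.card := by
      rw [himg]
      apply Finset.card_image_of_injOn
      intro i hi j hj hij
      exact hwAtinj i j (hPmem i hi).2.2 (hPmem j hj).2.2 hij
    obtain ⟨is, his, hiss⟩ := (hmem s).1 hs
    have hisP : is ∈ P := by
      have h2 := his.2.1
      simp only [hPdef, Finset.mem_filter, Finset.mem_range]
      exact ⟨by omega, his, le_of_eq hiss⟩
    have hPne : P.Nonempty := ⟨is, hisP⟩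
    set i0 := P.min' hPne with hi0def
    have hi0P : i0 ∈ P := P.min'_mem hPne
    have hi0pos : 0 < i0 := (hPmem i0 hi0P).1.1
    set N : Finset ℕ := (P ∪ P.image (· + 1)) ∪ {i0 - 1} with hNdef
    have hd1 : Disjoint P (P.image (· + 1)) := by
      rw [Finset.disjoint_left]
      intro i hiP hiI
      obtain ⟨j, hjP, hji⟩ := Finset.mem_image.1 hiI
      exact nonadj n w (hPmem i hiP).1 (hPmem j hjP).1 hji.symm
    have hd2 : Disjoint (P ∪ P.image (· + 1)) {i0 - 1} := by
      rw [Finset.disjoint_right]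
      intro i hi hiU
      simp only [Finset.mem_singleton] at hi
      subst hi
      rcases Finset.mem_union.1 hiU with h | h
      · have := P.min'_le _ h
        omega
      · obtain ⟨j, hjP, hji⟩ := Finset.mem_image.1 h
        have := P.min'_le _ hjP
        omega
    have hNcard : N.card = 2 * P.card + 1 := by
      rw [hNdef, Finset.card_union_of_disjoint hd2, Finset.card_union_of_disjoint hd1,
        Finset.card_image_of_injective _ (add_left_injective 1), Finset.card_singleton]
      ring
    have hNlt : ∀ i ∈ N, i < n ∧ 1 ≤ wAt n w i ∧ wAt n w i ≤ s := by
      intro i hi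
      rw [hNdef] at hi
      rcases Finset.mem_union.1 hi with h | h
      · rcases Finset.mem_union.1 h with h' | h'
        · obtain ⟨hp, hv, hn'⟩ := hPmem i h'
          exact ⟨hn', (hwlow i hn').1, hv⟩
        · obtain ⟨j, hjP, rfl⟩ := Finset.mem_image.1 h'
          obtain ⟨hp, hv, hn'⟩ := hPmem j hjP
          have h2 := hp.2.1
          refine ⟨by omega, (hwlow (j+1) (by omega)).1, ?_⟩
          have := hp.2.2.2
          omega
      · simp only [Finset.mem_singleton] at h
        subst h
        obtain ⟨hp, hv, hn'⟩ := hPmem i0 hi0P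
        refine ⟨by omega, (hwlow (i0-1) (by omega)).1, ?_⟩
        have := hp.2.2.1
        omega
    have himg2 : N.image (wAt n w) ⊆ Finset.Icc (1:ℤ) s := by
      intro x hx
      obtain ⟨i, hiN, rfl⟩ := Finset.mem_image.1 hx
      have := hNlt i hiN
      simp only [Finset.mem_Icc]
      exact ⟨this.2.1, this.2.2⟩
    have hNinj : (N.image (wAt n w)).card = N.card := by
      apply Finset.card_image_of_injOn
      intro i hi j hj hij
      exact hwAtinj i j (hNlt i hi).1 (hNlt j hj).1 hij
    have hle := Finset.card_le_card himg2
    rw [hNinj, hNcard, Int.card_Icc] at hle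
    have hs1 : 1 ≤ s := by
      have := (hmem s).1 hs
      obtain ⟨i, hi, hix⟩ := this
      have h2 := hi.2.1
      have := (hwlow i (by omega)).1
      omega
    rw [hcard]
    omega

/-- L1 : necessity for type B -/
lemma apsb_necessary {n k : ℕ} (hn : n = 2*k+1) {S : Finset ℤ} (h : APSB n S)
    (hpos : ∀ x ∈ S, 0 < x) :
    (↑S ⊆ Set.Icc (1:ℤ) n) ∧ S.card ≤ k := by
  obtain ⟨w, hsp, hpin⟩ := h
  have hmem : ∀ x, x ∈ S ↔ ∃ i, PinPred n w i ∧ wAt n w i = x := by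
    intro x
    rw [← mem_pinSet_iff, hpin]; simp
  constructor
  · intro x hx
    obtain ⟨i, hi, hix⟩ := (hmem x).1 hx
    have h2 := hi.2.1
    rw [wAt_eq n w i (by omega)] at hix
    have hb := hsp.1 ⟨i, by omega⟩
    have hx0 : 0 < x := hpos x hx
    rw [abs_of_pos (by omega : (0:ℤ) < w ⟨i, by omega⟩)] at hb
    simp only [Set.mem_Icc]
    omega
  · have himg : S ⊆ (PinPos n w).image (wAt n w) := by
      intro x hx
      obtain ⟨i, hi, hix⟩ := (hmem x).1 hx
      apply Finset.mem_image.2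
      refine ⟨i, ?_, hix⟩
      have h2 := hi.2.1
      simp only [PinPos, Finset.mem_filter, Finset.mem_range]
      exact ⟨by omega, hi⟩
    have h1 : S.card ≤ (PinPos n w).card :=
      le_trans (Finset.card_le_card himg) (Finset.card_image_le)
    have h2 : 2 * (PinPos n w).card ≤ n - 1 := by
      apply pinpos_card
      intro i hi
      exact (Finset.mem_filter.1 hi).2
    omega

/-- `emb S i` : the `i`-th smallest element of `S` (0-based), 0 out of range. -/
def emb (S : Finset ℤ) : ℕ → ℤ :=
  fun i => if h : i < S.card then S.orderEmbOfFin rfl ⟨i, h⟩ else 0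

lemma emb_mem {S : Finset ℤ} {i : ℕ} (h : i < S.card) : emb S i ∈ S := by
  rw [emb, dif_pos h]
  exact S.orderEmbOfFin_mem rfl ⟨i, h⟩

lemma emb_lt {S : Finset ℤ} {i j : ℕ} (hij : i < j) (hj : j < S.card) :
    emb S i < emb S j := by
  rw [emb, emb, dif_pos hj, dif_pos (lt_trans hij hj)]
  exact (S.orderEmbOfFin rfl).strictMono (by exact hij)

lemma emb_mono {S : Finset ℤ} {i j : ℕ} (hij : i ≤ j) (hj : j < S.card) :
    emb S i ≤ emb S j := by
  rcases eq_or_lt_of_le hij with rfl | h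
  · exact le_rfl
  · exact (emb_lt h hj).le

lemma emb_surj {S : Finset ℤ} {x : ℤ} (hx : x ∈ S) : ∃ i, i < S.card ∧ emb S i = x := by
  have : x ∈ Set.range (S.orderEmbOfFin rfl) := by
    rw [Finset.range_orderEmbOfFin]
    exact hx
  obtain ⟨j, hj⟩ := this
  exact ⟨j.1, j.2, by rw [emb, dif_pos j.2]; simpa using hj⟩

lemma fin_count_le (d i : ℕ) (hi : i < d) :
    ((Finset.univ : Finset (Fin d)).filter (fun j : Fin d => (j:ℕ) ≤ i)).card = i + 1 := by
  have himg : ((Finset.univ : Finset (Fin d)).filter (fun j : Fin d => (j:ℕ) ≤ i)).image Fin.val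
      = Finset.range (i+1) := by
    ext x
    simp only [Finset.mem_image, Finset.mem_filter, Finset.mem_univ, true_and,
      Finset.mem_range]
    constructor
    · rintro ⟨j, hj, rfl⟩; omega
    · intro hx
      exact ⟨⟨x, by omega⟩, by simpa using (by omega : x ≤ i), rfl⟩
  have := congrArg Finset.card himg
  rw [Finset.card_image_of_injOn (Set.injOn_of_injective Fin.val_injective)] at this
  rw [this, Finset.card_range]

lemma fin_count_lt (d i : ℕ) (hi : i ≤ d) :
    ((Finset.univ : Finset (Fin d)).filter (fun j : Fin d => (j:ℕ) < i)).card = i := by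
  have himg : ((Finset.univ : Finset (Fin d)).filter (fun j : Fin d => (j:ℕ) < i)).image Fin.val
      = Finset.range i := by
    ext x
    simp only [Finset.mem_image, Finset.mem_filter, Finset.mem_univ, true_and,
      Finset.mem_range]
    constructor
    · rintro ⟨j, hj, rfl⟩; omega
    · intro hx
      exact ⟨⟨x, by omega⟩, by simpa using (by omega : x < i), rfl⟩
  have := congrArg Finset.card himg
  rw [Finset.card_image_of_injOn (Set.injOn_of_injective Fin.val_injective)] at this
  rw [this, Finset.card_range]

lemma filt_le_card {S : Finset ℤ} {i : ℕ} (h : i < S.card) :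
    (S.filter (fun x => x ≤ emb S i)).card = i + 1 := by
  have himg : S.filter (fun x => x ≤ emb S i)
      = ((Finset.univ : Finset (Fin S.card)).filter (fun j : Fin S.card => (j:ℕ) ≤ i)).image
          (fun j => emb S j.1) := by
    ext y
    simp only [Finset.mem_filter, Finset.mem_image, Finset.mem_univ, true_and]
    constructor
    · rintro ⟨hyS, hyle⟩
      obtain ⟨j, hj, rfl⟩ := emb_surj hyS
      refine ⟨⟨j, hj⟩, ?_, rfl⟩
      by_contra hc
      simp only [not_le] at hc
      exact absurd (emb_lt hc hj) (by omega)
    · rintro ⟨j, hj, rfl⟩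
      exact ⟨emb_mem j.2, emb_mono hj h⟩
  rw [himg, Finset.card_image_of_injOn, fin_count_le _ _ h]
  intro a ha b hb hab
  simp only [Finset.coe_filter] at ha hb
  by_contra hne
  rcases lt_or_gt_of_ne (fun hh : a = b => hne hh) with hlt | hlt
  · exact absurd hab (ne_of_lt (emb_lt hlt b.2))
  · exact absurd hab.symm (ne_of_lt (emb_lt hlt a.2))

lemma filt_lt_card {S : Finset ℤ} {i : ℕ} (h : i < S.card) :
    (S.filter (fun x => x < emb S i)).card = i := by
  have himg : S.filter (fun x => x < emb S i)
      = ((Finset.univ : Finset (Fin S.card)).filter (fun j : Fin S.card => (j:ℕ) < i)).image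
          (fun j => emb S j.1) := by
    ext y
    simp only [Finset.mem_filter, Finset.mem_image, Finset.mem_univ, true_and]
    constructor
    · rintro ⟨hyS, hyle⟩
      obtain ⟨j, hj, rfl⟩ := emb_surj hyS
      refine ⟨⟨j, hj⟩, ?_, rfl⟩
      by_contra hc
      simp only [not_lt] at hc
      exact absurd (emb_mono hc hj) (by omega)
    · rintro ⟨j, hj, rfl⟩
      exact ⟨emb_mem j.2, emb_lt hj h⟩
  rw [himg, Finset.card_image_of_injOn, fin_count_lt _ _ h.le]
  intro a ha b hb hab
  by_contra hne
  rcases lt_or_gt_of_ne (fun hh : a = b => hne hh) with hlt | hlt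
  · exact absurd hab (ne_of_lt (emb_lt hlt b.2))
  · exact absurd hab.symm (ne_of_lt (emb_lt hlt a.2))

lemma emb_lt_of_count {S : Finset ℤ} {r : ℕ} {x : ℤ} (hr : r < S.card)
    (hc : r + 1 ≤ (S.filter (fun y => y < x)).card) : emb S r < x := by
  by_contra hcon
  simp only [not_lt] at hcon
  have hsub : S.filter (fun y => y < x) ⊆ S.filter (fun y => y < emb S r) := by
    intro y hy
    simp only [Finset.mem_filter] at hy ⊢
    exact ⟨hy.1, lt_of_lt_of_le hy.2 hcon⟩
  have := Finset.card_le_card hsub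
  rw [filt_lt_card hr] at this
  omega

def Acond (S : Finset ℤ) : Prop :=
  ∀ s ∈ S, 2 * ((S.filter (fun x => x ≤ s)).card : ℤ) < s

/-- the constructed word -/
def cw (n d : ℕ) (S T : Finset ℤ) (ε : ℤ) : Fin n → ℤ :=
  fun j => if j.1 % 2 = 1 ∧ j.1 < 2*d then emb S (j.1/2)
           else ε * emb T (j.1 - min d ((j.1+1)/2))

lemma cw_eval (n d : ℕ) (S T : Finset ℤ) (ε : ℤ) (j : ℕ) (hj : j < n) :
    wAt n (cw n d S T ε) j = if j % 2 = 1 ∧ j < 2*d then emb S (j/2)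
           else ε * emb T (j - min d ((j+1)/2)) := by
  rw [wAt_eq n _ j hj]
  rfl

set_option maxHeartbeats 2000000 in
lemma construct (k : ℕ) (S : Finset ℤ) (hS : ↑S ⊆ Set.Icc (1:ℤ) ((2*k+1 : ℕ) : ℤ))
    (hd : S.card ≤ k) (ε : ℤ) (hε : ε = 1 ∨ ε = -1) (hA : ε = 1 → Acond S) :
    ∃ w : Fin (2*k+1) → ℤ, IsSignedPerm (2*k+1) w ∧ (ε = 1 → ∀ i, 0 < w i) ∧
      PinSet (2*k+1) w = ↑S := by
  set n := 2*k+1 with hn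
  set d := S.card with hdd
  set T := Finset.Icc (1:ℤ) (n:ℤ) \ S with hT
  have hsub : S ⊆ Finset.Icc (1:ℤ) (n:ℤ) := by
    intro x hx
    have := hS hx
    simpa [Finset.mem_Icc] using this
  have hIccCard : (Finset.Icc (1:ℤ) (n:ℤ)).card = n := by
    rw [Int.card_Icc]
    simp
  have hm : T.card = n - d := by
    rw [hT, Finset.card_sdiff_of_subset hsub, hIccCard]
  have hmd : d + 1 ≤ T.card := by omega
  have hvalS : ∀ i, i < d → 1 ≤ emb S i ∧ emb S i ≤ (n:ℤ) := by
    intro i hi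
    have := hsub (emb_mem hi)
    simpa [Finset.mem_Icc] using this
  have hvalT : ∀ r, r < T.card → (1 ≤ emb T r ∧ emb T r ≤ (n:ℤ)) ∧ emb T r ∉ S := by
    intro r hr
    have := emb_mem hr
    rw [hT, Finset.mem_sdiff, Finset.mem_Icc] at this
    exact this
  -- key comparison for the unsigned case
  have hkeyA : ε = 1 → ∀ i, i < d → emb T (i+1) < emb S i := by
    intro he i hi
    have hac := hA he (emb S i) (emb_mem hi)
    rw [filt_le_card hi] at hac
    have hsi := hvalS i hi
    -- count elements of T below emb S i
    have hfilIcc : (Finset.Icc (1:ℤ) (n:ℤ)).filter (fun y => y < emb S i)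
        = Finset.Icc (1:ℤ) (emb S i - 1) := by
      ext y
      simp only [Finset.mem_filter, Finset.mem_Icc]
      omega
    have hfilT : T.filter (fun y => y < emb S i)
        = (Finset.Icc (1:ℤ) (n:ℤ)).filter (fun y => y < emb S i)
          \ (S.filter (fun y => y < emb S i)) := by
      rw [hT]
      ext y
      simp only [Finset.mem_filter, Finset.mem_sdiff, Finset.mem_Icc]
      tauto
    have hcT : (T.filter (fun y => y < emb S i)).card
        = (emb S i - 1).toNat - i := by
      rw [hfilT, Finset.card_sdiff_of_subset (Finset.filter_subset_filter _ hsub), hfilIcc,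
        filt_lt_card hi, Int.card_Icc]
      congr 1
      omega
    apply emb_lt_of_count (by omega)
    rw [hcT]
    omega
  have hTS : ε = 1 → ∀ i, i < d → emb T i < emb S i := by
    intro he i hi
    exact lt_trans (emb_lt (by omega) (by omega)) (hkeyA he i hi)
  -- basic facts
  have hembSinj : ∀ a b, a < d → b < d → emb S a = emb S b → a = b := by
    intro a b ha hb hab
    by_contra hne
    rcases Nat.lt_or_ge a b with h | h
    · exact absurd hab (ne_of_lt (emb_lt h hb))
    · have : b < a := by omega
      exact absurd hab.symm (ne_of_lt (emb_lt this ha))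
  have hembTinj : ∀ a b, a < T.card → b < T.card → emb T a = emb T b → a = b := by
    intro a b ha hb hab
    by_contra hne
    rcases Nat.lt_or_ge a b with h | h
    · exact absurd hab (ne_of_lt (emb_lt h hb))
    · have : b < a := by omega
      exact absurd hab.symm (ne_of_lt (emb_lt this ha))
  have hidx : ∀ j : ℕ, j < n → ¬(j % 2 = 1 ∧ j < 2*d) → j - min d ((j+1)/2) < T.card := by
    intro j hj hc
    omega
  have hidxS : ∀ j : ℕ, j % 2 = 1 → j < 2*d → j/2 < d := by
    intro j h1 h2; omega
  refine ⟨cw n d S T ε, ⟨?_, ?_⟩, ?_, ?_⟩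
  · -- bounds
    intro j
    by_cases hc : j.1 % 2 = 1 ∧ j.1 < 2*d
    · have he1 : cw n d S T ε j = emb S (j.1/2) := by
        simp only [cw]; rw [if_pos hc]
      rw [he1]
      have := hvalS (j.1/2) (hidxS j.1 hc.1 hc.2)
      rw [abs_of_pos (by omega)]
      omega
    · have he1 : cw n d S T ε j = ε * emb T (j.1 - min d ((j.1+1)/2)) := by
        simp only [cw]; rw [if_neg hc]
      rw [he1]
      have hb := (hvalT _ (hidx j.1 j.2 hc)).1
      rcases hε with he | he <;> subst he
      · rw [one_mul, abs_of_pos (by omega)]; omega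
      · rw [show (-1 : ℤ) * emb T (j.1 - min d ((j.1+1)/2)) 
            = -(emb T (j.1 - min d ((j.1+1)/2))) by ring, abs_neg, abs_of_pos (by omega)]
        omega
  · -- injectivity of absolute values
    intro j1 j2 heq
    simp only at heq
    apply Fin.ext
    by_cases hc1 : j1.1 % 2 = 1 ∧ j1.1 < 2*d <;> by_cases hc2 : j2.1 % 2 = 1 ∧ j2.1 < 2*d
    · have he1 : cw n d S T ε j1 = emb S (j1.1/2) := by simp only [cw]; rw [if_pos hc1]
      have he2 : cw n d S T ε j2 = emb S (j2.1/2) := by simp only [cw]; rw [if_pos hc2]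
      rw [he1, he2] at heq
      have hb1 := hvalS _ (hidxS j1.1 hc1.1 hc1.2)
      have hb2 := hvalS _ (hidxS j2.1 hc2.1 hc2.2)
      rw [abs_of_pos (by omega), abs_of_pos (by omega)] at heq
      have := hembSinj _ _ (hidxS j1.1 hc1.1 hc1.2) (hidxS j2.1 hc2.1 hc2.2) heq
      omega
    · exfalso
      have he1 : cw n d S T ε j1 = emb S (j1.1/2) := by simp only [cw]; rw [if_pos hc1]
      have he2 : cw n d S T ε j2 = ε * emb T (j2.1 - min d ((j2.1+1)/2)) := by
        simp only [cw]; rw [if_neg hc2]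
      rw [he1, he2] at heq
      have hb1 := hvalS _ (hidxS j1.1 hc1.1 hc1.2)
      have hb2 := (hvalT _ (hidx j2.1 j2.2 hc2)).1
      have hb2' := (hvalT _ (hidx j2.1 j2.2 hc2)).2
      have habs : |ε * emb T (j2.1 - min d ((j2.1+1)/2))| 
          = emb T (j2.1 - min d ((j2.1+1)/2)) := by
        rcases hε with he | he <;> subst he
        · rw [one_mul, abs_of_pos (by omega)]
        · rw [show (-1 : ℤ) * emb T (j2.1 - min d ((j2.1+1)/2)) 
            = -(emb T (j2.1 - min d ((j2.1+1)/2))) by ring, abs_neg, abs_of_pos (by omega)]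
      rw [habs, abs_of_pos (by omega)] at heq
      exact hb2' (heq ▸ emb_mem (hidxS j1.1 hc1.1 hc1.2))
    · exfalso
      have he1 : cw n d S T ε j1 = ε * emb T (j1.1 - min d ((j1.1+1)/2)) := by
        simp only [cw]; rw [if_neg hc1]
      have he2 : cw n d S T ε j2 = emb S (j2.1/2) := by simp only [cw]; rw [if_pos hc2]
      rw [he1, he2] at heq
      have hb1 := (hvalT _ (hidx j1.1 j1.2 hc1)).1
      have hb1' := (hvalT _ (hidx j1.1 j1.2 hc1)).2
      have hb2 := hvalS _ (hidxS j2.1 hc2.1 hc2.2)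
      have habs : |ε * emb T (j1.1 - min d ((j1.1+1)/2))| 
          = emb T (j1.1 - min d ((j1.1+1)/2)) := by
        rcases hε with he | he <;> subst he
        · rw [one_mul, abs_of_pos (by omega)]
        · rw [show (-1 : ℤ) * emb T (j1.1 - min d ((j1.1+1)/2)) 
            = -(emb T (j1.1 - min d ((j1.1+1)/2))) by ring, abs_neg, abs_of_pos (by omega)]
      rw [habs, abs_of_pos (by omega)] at heq
      exact hb1' (heq ▸ emb_mem (hidxS j2.1 hc2.1 hc2.2))
    · have he1 : cw n d S T ε j1 = ε * emb T (j1.1 - min d ((j1.1+1)/2)) := by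
        simp only [cw]; rw [if_neg hc1]
      have he2 : cw n d S T ε j2 = ε * emb T (j2.1 - min d ((j2.1+1)/2)) := by
        simp only [cw]; rw [if_neg hc2]
      rw [he1, he2] at heq
      have hb1 := (hvalT _ (hidx j1.1 j1.2 hc1)).1
      have hb2 := (hvalT _ (hidx j2.1 j2.2 hc2)).1
      have habs : ∀ r, r < T.card → |ε * emb T r| = emb T r := by
        intro r hr
        have := (hvalT r hr).1
        rcases hε with he | he <;> subst he
        · rw [one_mul, abs_of_pos (by omega)]
        · rw [show (-1 : ℤ) * emb T r = -(emb T r) by ring, abs_neg, abs_of_pos (by omega)]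
      rw [habs _ (hidx j1.1 j1.2 hc1), habs _ (hidx j2.1 j2.2 hc2)] at heq
      have := hembTinj _ _ (hidx j1.1 j1.2 hc1) (hidx j2.1 j2.2 hc2) heq
      have hj1 := j1.2
      have hj2 := j2.2
      omega
  · -- positivity when ε = 1
    intro he j
    subst he
    by_cases hc : j.1 % 2 = 1 ∧ j.1 < 2*d
    · have he1 : cw n d S T 1 j = emb S (j.1/2) := by simp only [cw]; rw [if_pos hc]
      rw [he1]
      have := hvalS _ (hidxS j.1 hc.1 hc.2)
      omega
    · have he1 : cw n d S T 1 j = 1 * emb T (j.1 - min d ((j.1+1)/2)) := by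
        simp only [cw]; rw [if_neg hc]
      rw [he1, one_mul]
      have := (hvalT _ (hidx j.1 j.2 hc)).1
      omega
  · -- PinSet = S
    apply Set.eq_of_subset_of_subset
    · -- every pinnacle value is in S
      intro x hx
      rw [mem_pinSet_iff] at hx
      obtain ⟨j, ⟨h0, h2, hl, hr⟩, hval⟩ := hx
      by_cases hc : j % 2 = 1 ∧ j < 2*d
      · rw [cw_eval n d S T ε j (by omega), if_pos hc] at hval
        simp only [Finset.coe_sort_coe, Finset.mem_coe]
        exact hval ▸ emb_mem (hidxS j hc.1 hc.2)
      · exfalso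
        rw [cw_eval n d S T ε j (by omega), if_neg hc] at hval
        -- j is a non-pinnacle position; derive contradiction
        rcases Nat.lt_or_ge j (2*d) with hj2d | hj2d
        · -- j even, 2 ≤ j < 2d : right neighbor is a "pinnacle-slot"
          have hjev : j % 2 = 0 := by omega
          have hcr : (j+1) % 2 = 1 ∧ j + 1 < 2*d := by omega
          rw [cw_eval n d S T ε (j+1) (by omega), if_pos hcr] at hr
          rw [cw_eval n d S T ε j (by omega), if_neg hc] at hr
          have hidj : j - min d ((j+1)/2) = j/2 := by omega
          have hfj : (j+1)/2 = j/2 := by omega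
          rw [hidj, hfj] at hr
          have hjd : j/2 < d := by omega
          have hbS := hvalS _ hjd
          have hbT := (hvalT (j/2) (by omega)).1
          rcases hε with he | he <;> subst he
          · have := hTS rfl (j/2) hjd
            rw [one_mul] at hr
            omega
          · omega
        · rcases Nat.eq_or_lt_of_le hj2d with hj2d' | hj2d'
          · -- j = 2d : left neighbor is pinnacle slot 2d-1 (d ≥ 1)
            have hd1 : 1 ≤ d := by omega
            have hcl : (j-1) % 2 = 1 ∧ j - 1 < 2*d := by omega
            rw [cw_eval n d S T ε (j-1) (by omega), if_pos hcl] at hl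
            rw [cw_eval n d S T ε j (by omega), if_neg hc] at hl
            have hidj : j - min d ((j+1)/2) = d := by omega
            have hfj : (j-1)/2 = d - 1 := by omega
            rw [hidj, hfj] at hl
            have hbS := hvalS (d-1) (by omega)
            have hbT := (hvalT d (by omega)).1
            rcases hε with he | he <;> subst he
            · have := hkeyA rfl (d-1) (by omega)
              rw [one_mul] at hl
              have hdm : d - 1 + 1 = d := by omega
              rw [hdm] at this
              omega
            · omega
          · -- j > 2d : both neighbors in the T-tail
            have hcr' : ¬((j+1) % 2 = 1 ∧ j + 1 < 2*d) := by omega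
            have hcl' : ¬((j-1) % 2 = 1 ∧ j - 1 < 2*d) := by omega
            rw [cw_eval n d S T ε (j+1) (by omega), if_neg hcr'] at hr
            rw [cw_eval n d S T ε j (by omega), if_neg hc] at hr
            rw [cw_eval n d S T ε (j-1) (by omega), if_neg hcl'] at hl
            rw [cw_eval n d S T ε j (by omega), if_neg hc] at hl
            have hi1 : (j+1) - min d ((j+1+1)/2) = j + 1 - d := by omega
            have hi2 : j - min d ((j+1)/2) = j - d := by omega
            have hi3 : (j-1) - min d ((j-1+1)/2) = j - 1 - d := by omega
            rw [hi1, hi2] at hr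
            rw [hi3, hi2] at hl
            have hmono1 : emb T (j - d) < emb T (j + 1 - d) := emb_lt (by omega) (by omega)
            have hmono2 : emb T (j - 1 - d) < emb T (j - d) := emb_lt (by omega) (by omega)
            rcases hε with he | he <;> subst he
            · rw [one_mul, one_mul] at hr
              omega
            · have h1 : (-1 : ℤ) * emb T (j-1-d) = -(emb T (j-1-d)) := by ring
              have h2 : (-1 : ℤ) * emb T (j-d) = -(emb T (j-d)) := by ring
              rw [h1, h2] at hl
              omega
    · -- every element of S is a pinnacle value
      intro x hx
      simp only [Finset.coe_sort_coe, Finset.mem_coe] at hx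
      obtain ⟨i, hi, rfl⟩ := emb_surj hx
      rw [mem_pinSet_iff]
      refine ⟨2*i+1, ⟨by omega, by omega, ?_, ?_⟩, ?_⟩
      · -- left neighbor 2i
        have hcl : ¬((2*i) % 2 = 1 ∧ 2*i < 2*d) := by omega
        have hcp : (2*i+1) % 2 = 1 ∧ 2*i+1 < 2*d := by omega
        rw [show 2*i+1-1 = 2*i by omega, cw_eval n d S T ε (2*i) (by omega), if_neg hcl,
          cw_eval n d S T ε (2*i+1) (by omega), if_pos hcp]
        have hii : 2*i - min d ((2*i+1)/2) = i := by omega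
        have hjj : (2*i+1)/2 = i := by omega
        rw [hii, hjj]
        have hbS := hvalS i hi
        have hbT := (hvalT i (by omega)).1
        rcases hε with he | he <;> subst he
        · rw [one_mul]
          exact hTS rfl i hi
        · omega
      · -- right neighbor 2i+2
        have hcr : ¬((2*i+1+1) % 2 = 1 ∧ 2*i+1+1 < 2*d) := by omega
        have hcp : (2*i+1) % 2 = 1 ∧ 2*i+1 < 2*d := by omega
        rw [cw_eval n d S T ε (2*i+1+1) (by omega), if_neg hcr,
          cw_eval n d S T ε (2*i+1) (by omega), if_pos hcp]
        have hii : 2*i+1+1 - min d ((2*i+1+1+1)/2) = i + 1 := by omega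
        have hjj : (2*i+1)/2 = i := by omega
        rw [hii, hjj]
        have hbS := hvalS i hi
        have hbT := (hvalT (i+1) (by omega)).1
        rcases hε with he | he <;> subst he
        · rw [one_mul]
          exact hkeyA rfl i hi
        · omega
      · have hcp : (2*i+1) % 2 = 1 ∧ 2*i+1 < 2*d := by omega
        rw [cw_eval n d S T ε (2*i+1) (by omega), if_pos hcp]
        congr 1
        omega

instance : DecidablePred Acond := fun S => by unfold Acond; infer_instance

lemma acond_card {k : ℕ} {S : Finset ℤ} (hsub : S ⊆ Finset.Icc (1:ℤ) ((2*k+1:ℕ):ℤ))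
    (hA : Acond S) : S.card ≤ k := by
  rcases Finset.eq_empty_or_nonempty S with rfl | hne
  · simp
  have hd : 0 < S.card := Finset.card_pos.2 hne
  have hmax := hA (emb S (S.card - 1)) (emb_mem (by omega))
  rw [filt_le_card (by omega)] at hmax
  have hb := hsub (emb_mem (show S.card - 1 < S.card by omega))
  simp only [Finset.mem_Icc] at hb
  push_cast at hmax hb ⊢
  omega

lemma apsa_iff {k : ℕ} (S : Finset ℤ) :
    APSA (2*k+1) S ↔ (S ⊆ Finset.Icc (1:ℤ) ((2*k+1:ℕ):ℤ) ∧ Acond S) := by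
  constructor
  · intro h
    have := apsa_necessary h
    refine ⟨fun x hx => ?_, this.2⟩
    have := this.1 hx
    simpa [Finset.mem_Icc] using this
  · rintro ⟨hsub, hA⟩
    have hS : ↑S ⊆ Set.Icc (1:ℤ) ((2*k+1:ℕ):ℤ) := by
      intro x hx
      have := hsub hx
      simpa [Finset.mem_Icc] using this
    obtain ⟨w, hsp, hpos, hpin⟩ := construct k S hS (acond_card hsub hA) 1 (Or.inl rfl)
      (fun _ => hA)
    exact ⟨w, hsp, hpos rfl, hpin⟩

lemma apsb_of (k : ℕ) (S : Finset ℤ) (hsub : S ⊆ Finset.Icc (1:ℤ) ((2*k+1:ℕ):ℤ))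
    (hd : S.card ≤ k) : APSB (2*k+1) S := by
  have hS : ↑S ⊆ Set.Icc (1:ℤ) ((2*k+1:ℕ):ℤ) := by
    intro x hx
    have := hsub hx
    simpa [Finset.mem_Icc] using this
  obtain ⟨w, hsp, _, hpin⟩ := construct k S hS hd (-1) (Or.inr rfl)
    (fun h => absurd h (by norm_num))
  exact ⟨w, hsp, hpin⟩

theorem stmt18 (k : ℕ) :
    {S : Finset ℤ | (∀ x ∈ S, 0 < x) ∧ APSB (2 * k + 1) S ∧ ¬ APSA (2 * k + 1) S}.ncard
      = 4 ^ k - Nat.choose (2 * k) k := by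
  classical
  set n : ℕ := 2*k+1 with hn
  set I : Finset ℤ := Finset.Icc (1:ℤ) (n:ℤ) with hI
  have hIccCard : I.card = n := by
    rw [hI, Int.card_Icc]; simp
  set F : Finset (Finset ℤ) := I.powerset.filter (fun S => S.card ≤ k ∧ ¬ Acond S) with hF
  have hset : {S : Finset ℤ | (∀ x ∈ S, 0 < x) ∧ APSB (2 * k + 1) S ∧ ¬ APSA (2 * k + 1) S}
      = ↑F := by
    ext S
    simp only [Set.mem_setOf_eq, hF, Finset.coe_filter, Finset.mem_powerset,
      Set.mem_setOf_eq]
    constructor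
    · rintro ⟨hpos, hB, hnA⟩
      have hnec := apsb_necessary (by omega : (2*k+1) = 2*k+1) hB hpos
      have hsub : S ⊆ I := by
        intro x hx
        have := hnec.1 hx
        simpa [hI, hn, Finset.mem_Icc] using this
      refine ⟨hsub, hnec.2, fun hA => hnA ?_⟩
      exact (apsa_iff S).2 ⟨hsub, hA⟩
    · rintro ⟨hsub, hcard, hnA⟩
      refine ⟨?_, apsb_of k S hsub hcard, fun hA => hnA ((apsa_iff S).1 hA).2⟩
      intro x hx
      have := hsub hx
      simp only [hI, Finset.mem_Icc] at this
      omega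
  rw [hset, Set.ncard_coe_finset]
  -- split the counting
  set F1 : Finset (Finset ℤ) := I.powerset.filter (fun S => S.card ≤ k) with hF1
  set F2 : Finset (Finset ℤ) := I.powerset.filter Acond with hF2
  have hunion : F1 = F ∪ F2 := by
    ext S
    simp only [hF1, hF, hF2, Finset.mem_union, Finset.mem_filter, Finset.mem_powerset]
    constructor
    · rintro ⟨hsub, hcard⟩
      by_cases hA : Acond S
      · exact Or.inr ⟨hsub, hA⟩
      · exact Or.inl ⟨hsub, hcard, hA⟩
    · rintro (⟨hsub, hcard, _⟩ | ⟨hsub, hA⟩)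
      · exact ⟨hsub, hcard⟩
      · exact ⟨hsub, acond_card hsub hA⟩
  have hdisj : Disjoint F F2 := by
    rw [Finset.disjoint_left]
    intro S hS1 hS2
    simp only [hF, hF2, Finset.mem_filter] at hS1 hS2
    exact hS1.2.2 hS2.2
  have hsplit : F1.card = F.card + F2.card := by
    rw [hunion, Finset.card_union_of_disjoint hdisj]
  -- F1 card
  have hF1card : F1.card = 4 ^ k := by
    have hbi : F1 = (Finset.range (k+1)).biUnion (fun i => Finset.powersetCard i I) := by
      ext S
      simp only [hF1, Finset.mem_filter, Finset.mem_powerset, Finset.mem_biUnion,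
        Finset.mem_range, Finset.mem_powersetCard]
      constructor
      · rintro ⟨hsub, hcard⟩
        exact ⟨S.card, by omega, hsub, rfl⟩
      · rintro ⟨i, hik, hsub, rfl⟩
        exact ⟨hsub, by omega⟩
    rw [hbi, Finset.card_biUnion]
    · have : ∀ i ∈ Finset.range (k+1), (Finset.powersetCard i I).card = (2*k+1).choose i := by
        intro i _
        rw [Finset.card_powersetCard, hIccCard]
      rw [Finset.sum_congr rfl this]
      exact Nat.sum_range_choose_halfway k
    · intro i _ j _ hij
      rw [Function.onFun, Finset.disjoint_left]
      intro S hSi hSj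
      rw [Finset.mem_powersetCard] at hSi hSj
      exact hij (hSi.2 ▸ hSj.2)
  -- F2 card
  have hF2card : F2.card = (2*k).choose k := by
    have hcr := countR n 1 1
    have hIcc2 : Finset.Icc (1:ℤ) (1 + (n:ℤ) - 1) = I := by
      rw [hI]; congr 1; ring
    rw [hIcc2] at hcr
    have hcong : I.powerset.filter
        (fun S => ∀ s ∈ S, 2*((S.filter (fun x => x ≤ s)).card : ℤ) + 1 ≤ s - 1 + 1)
        = F2 := by
      rw [hF2]
      apply Finset.filter_congr
      intro S _
      unfold Acond
      constructor
      · intro h s hs; have := h s hs; omega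
      · intro h s hs; have := h s hs; omega
    rw [hcong] at hcr
    rw [hcr]
    have hg1 : Gfun n 1 = Gfun (2*k) 0 := by
      rw [hn]
      show Gfun (2*k+1) 1 = Gfun (2*k) 0
      rw [show Gfun (2*k+1) 1 = Gfun (2*k) 0 + if (1:ℤ) ≤ -1 then Gfun (2*k) 2 else 0 from rfl]
      norm_num
    have hg2 := gfun_closed (2*k) 0 ⟨k, by ring⟩
    rw [hg1]
    have e0 : (-((0:ℕ):ℤ)) = 0 := by norm_num
    rw [e0] at hg2
    have e1 : (2*k+0)/2 + 1 = k + 1 := by omega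
    have e2 : (2*k-0)/2 = k := by omega
    rw [e1, e2] at hg2
    have hps : Psum (2*k) (k+1) = Psum (2*k) k + (2*k).choose k := by
      simp [Psum, Finset.sum_range_succ]
    omega
  omega
end

section
/- For k ≥ 1, the number of all-positive sets that are admissible pinnacle sets of the hyperoctahedral group B_{2k} but are not admissible pinnacle sets of the symmetric group S_{2k} equals 2^{2k-1} − C(2k, k). -/
open Finset


lemma abs_eps {ε x : ℤ} (hε : ε = 1 ∨ ε = -1) (hx : 0 < x) : |ε * x| = x := by
  rcases hε with rfl | rfl
  · rw [one_mul, abs_of_pos hx]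
  · rw [neg_one_mul, abs_neg, abs_of_pos hx]

section EnumHelpers
noncomputable def enum (F : Finset ℤ) (j : ℕ) : ℤ :=
  if h : j < F.card then (F.orderIsoOfFin rfl ⟨j, h⟩ : ℤ) else 0

lemma enum_mem {F : Finset ℤ} {j : ℕ} (hj : j < F.card) : enum F j ∈ F := by
  rw [enum, dif_pos hj]; exact (F.orderIsoOfFin rfl ⟨j, hj⟩).2

lemma enum_lt_enum {F : Finset ℤ} {i j : ℕ} (hij : i < j) (hj : j < F.card) :
    enum F i < enum F j := by
  rw [enum, enum, dif_pos hj, dif_pos (hij.trans hj)]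
  exact_mod_cast (F.orderIsoOfFin rfl).strictMono
    (show (⟨i, hij.trans hj⟩ : Fin F.card) < ⟨j, hj⟩ from hij)

lemma enum_le_enum {F : Finset ℤ} {i j : ℕ} (hij : i ≤ j) (hj : j < F.card) :
    enum F i ≤ enum F j := by
  rcases eq_or_lt_of_le hij with rfl | h
  · exact le_refl _
  · exact (enum_lt_enum h hj).le

lemma enum_injOn {F : Finset ℤ} {i j : ℕ} (hi : i < F.card) (hj : j < F.card)
    (h : enum F i = enum F j) : i = j := by
  rcases lt_trichotomy i j with h' | h' | h'
  · exact absurd h (enum_lt_enum h' hj).ne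
  · exact h'
  · exact absurd h.symm (enum_lt_enum h' hi).ne

lemma enum_surj {F : Finset ℤ} {x : ℤ} (hx : x ∈ F) : ∃ j, j < F.card ∧ enum F j = x := by
  obtain ⟨i, hi⟩ := (F.orderIsoOfFin rfl).surjective ⟨x, hx⟩
  exact ⟨i.1, i.2, by rw [enum, dif_pos i.2]; simp [Fin.eta, hi]⟩

lemma image_range_enum {F : Finset ℤ} {j : ℕ} (hj : j < F.card) :
    (Finset.range (j+1)).image (enum F) = F.filter (· ≤ enum F j) := by
  ext y
  simp only [mem_image, mem_range, mem_filter]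
  constructor
  · rintro ⟨i, hi, rfl⟩
    exact ⟨enum_mem (by omega), enum_le_enum (by omega) hj⟩
  · rintro ⟨hyF, hyle⟩
    obtain ⟨i, hi, rfl⟩ := enum_surj hyF
    refine ⟨i, ?_, rfl⟩
    by_contra h
    exact absurd hyle (not_le.2 (enum_lt_enum (by omega) hi))

lemma card_filter_le_enum {F : Finset ℤ} {j : ℕ} (hj : j < F.card) :
    (F.filter (· ≤ enum F j)).card = j + 1 := by
  rw [← image_range_enum hj, Finset.card_image_of_injOn, Finset.card_range]
  intro a ha b hb h
  simp only [coe_range, Set.mem_Iio] at ha hb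
  exact enum_injOn (by omega) (by omega) h

lemma enum_lt_of_card_filter {F : Finset ℤ} {j : ℕ} {x : ℤ}
    (h : j < (F.filter (· < x)).card) : enum F j < x := by
  by_contra hc
  push_neg at hc
  have hsub : F.filter (· < x) ⊆ (Finset.range j).image (enum F) := by
    intro y hy
    rw [mem_filter] at hy
    obtain ⟨i, hi, rfl⟩ := enum_surj hy.1
    refine mem_image.2 ⟨i, mem_range.2 ?_, rfl⟩
    by_contra h'
    exact absurd hy.2 (not_lt.2 (hc.trans (enum_le_enum (by omega) hi)))
  have h2 := (Finset.card_le_card hsub).trans Finset.card_image_le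
  rw [Finset.card_range] at h2
  omega
end EnumHelpers

section Constr
/-- the word realizing pinnacle set `S`: pinnacles at odd positions `< 2d`,
other positions filled with `ε` times complement values. -/
noncomputable def wrd (n : ℕ) (S : Finset ℤ) (ε : ℤ) : Fin n → ℤ :=
  fun i => if i.1 % 2 = 1 ∧ i.1 < 2 * S.card then enum S (i.1 / 2)
    else ε * enum (Finset.Icc 1 (n:ℤ) \ S)
      (if i.1 ≤ 2 * S.card then i.1 / 2 else i.1 - S.card)

variable {n : ℕ} {S : Finset ℤ}

lemma cardC (hS : S ⊆ Finset.Icc 1 (n:ℤ)) :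
    (Finset.Icc 1 (n:ℤ) \ S).card = n - S.card := by
  rw [Finset.card_sdiff_of_subset hS, Int.card_Icc]
  simp

lemma mem_Icc_bounds {x : ℤ} (hx : x ∈ Finset.Icc 1 (n:ℤ)) : 1 ≤ x ∧ x ≤ n := by
  rwa [Finset.mem_Icc] at hx

/-- index arithmetic : injectivity of the complement-index map -/
lemma idx_inj {d i j : ℕ} (hi : ¬(i % 2 = 1 ∧ i < 2 * d)) (hj : ¬(j % 2 = 1 ∧ j < 2 * d))
    (h : (if i ≤ 2*d then i / 2 else i - d) = (if j ≤ 2*d then j / 2 else j - d)) : i = j := by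
  split_ifs at h <;> omega

lemma idx_lt {d i : ℕ} (hd : 2 * d < n) (hin : i < n) :
    (if i ≤ 2*d then i / 2 else i - d) < n - d := by
  split_ifs <;> omega

lemma wrd_isSignedPerm (hS : S ⊆ Finset.Icc 1 (n:ℤ)) (hd : 2 * S.card < n)
    {ε : ℤ} (hε : ε = 1 ∨ ε = -1) : IsSignedPerm n (wrd n S ε) := by
  set d := S.card with hdd
  set C := Finset.Icc 1 (n:ℤ) \ S with hCC
  have hC : C.card = n - d := cardC hS
  have hCsub : C ⊆ Finset.Icc 1 (n:ℤ) := Finset.sdiff_subset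
  have habs : ∀ i : Fin n, |wrd n S ε i| ∈ Finset.Icc 1 (n:ℤ) ∧
      ((i.1 % 2 = 1 ∧ i.1 < 2 * d) → |wrd n S ε i| ∈ S) ∧
      (¬(i.1 % 2 = 1 ∧ i.1 < 2 * d) → |wrd n S ε i| ∈ C) := by
    intro i
    by_cases h : i.1 % 2 = 1 ∧ i.1 < 2 * d
    · have hjd : i.1 / 2 < d := by omega
      have hmem : enum S (i.1/2) ∈ S := enum_mem (by omega)
      have hb := mem_Icc_bounds (hS hmem)
      have : |wrd n S ε i| = enum S (i.1/2) := by
        rw [wrd, if_pos h, abs_of_pos (by omega)]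
      rw [this]
      exact ⟨hS hmem, fun _ => hmem, fun hc => absurd h hc⟩
    · have hidx := idx_lt (i := i.1) hd i.2
      have hmem : enum C (if i.1 ≤ 2*d then i.1 / 2 else i.1 - d) ∈ C :=
        enum_mem (by omega)
      have hb := mem_Icc_bounds (hCsub hmem)
      have : |wrd n S ε i| = enum C (if i.1 ≤ 2*d then i.1 / 2 else i.1 - d) := by
        rw [wrd, if_neg h]
        simp only [← hdd, ← hCC]
        rw [abs_eps hε (by omega)]
      rw [this]
      exact ⟨hCsub hmem, fun hc => absurd hc h, fun _ => hmem⟩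
  constructor
  · intro i
    exact mem_Icc_bounds (habs i).1
  · intro i j hij
    simp only at hij
    have hi := habs i; have hj := habs j
    by_cases h1 : i.1 % 2 = 1 ∧ i.1 < 2 * d <;> by_cases h2 : j.1 % 2 = 1 ∧ j.1 < 2 * d
    · -- both pinnacle positions
      have e1 : |wrd n S ε i| = enum S (i.1/2) := by
        rw [wrd, if_pos h1, abs_of_pos]
        have := mem_Icc_bounds (hS (enum_mem (show i.1/2 < S.card by omega))); omega
      have e2 : |wrd n S ε j| = enum S (j.1/2) := by
        rw [wrd, if_pos h2, abs_of_pos]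
        have := mem_Icc_bounds (hS (enum_mem (show j.1/2 < S.card by omega))); omega
      rw [e1, e2] at hij
      have := enum_injOn (show i.1/2 < S.card by omega) (show j.1/2 < S.card by omega) hij
      exact Fin.ext (by omega)
    · exfalso
      have := (hi.2.1 h1)
      have h2' := (hj.2.2 h2)
      rw [hij] at this
      rw [hCC, Finset.mem_sdiff] at h2'
      exact h2'.2 this
    · exfalso
      have := (hj.2.1 h2)
      have h1' := (hi.2.2 h1)
      rw [← hij] at this
      rw [hCC, Finset.mem_sdiff] at h1'
      exact h1'.2 this
    · have e1 : |wrd n S ε i| = enum C (if i.1 ≤ 2*d then i.1 / 2 else i.1 - d) := by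
        have := mem_Icc_bounds (hCsub (enum_mem (show (if i.1 ≤ 2*d then i.1/2 else i.1 - d) < C.card by
          have := idx_lt (i := i.1) hd i.2; omega)))
        rw [wrd, if_neg h1]
        simp only [← hdd, ← hCC]
        rw [abs_eps hε (by omega)]
      have e2 : |wrd n S ε j| = enum C (if j.1 ≤ 2*d then j.1 / 2 else j.1 - d) := by
        have := mem_Icc_bounds (hCsub (enum_mem (show (if j.1 ≤ 2*d then j.1/2 else j.1 - d) < C.card by
          have := idx_lt (i := j.1) hd j.2; omega)))
        rw [wrd, if_neg h2]
        simp only [← hdd, ← hCC]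
        rw [abs_eps hε (by omega)]
      rw [e1, e2] at hij
      have hii := idx_lt (i := i.1) hd i.2
      have hjj := idx_lt (i := j.1) hd j.2
      have := enum_injOn (F := C) (by omega) (by omega) hij
      exact Fin.ext (idx_inj h1 h2 this)
end Constr

def Adm (S : Finset ℤ) : Prop := ∀ x ∈ S, 2 * (((S.filter (· ≤ x)).card : ℤ)) < x

variable {n : ℕ} {S : Finset ℤ}

lemma wrd_pin_eval {ε : ℤ} {i : Fin n} (h1 : i.1 % 2 = 1) (h2 : i.1 < 2*S.card) :
    wrd n S ε i = enum S (i.1/2) := by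
  simp only [wrd]
  rw [if_pos ⟨h1, h2⟩]

lemma wrd_np_eval {ε : ℤ} {i : Fin n} (h : ¬(i.1 % 2 = 1 ∧ i.1 < 2*S.card)) :
    wrd n S ε i = ε * enum (Finset.Icc 1 (n:ℤ) \ S)
      (if i.1 ≤ 2*S.card then i.1/2 else i.1 - S.card) := by
  simp only [wrd]
  rw [if_neg h]

lemma pinset_wrd_B (hS : S ⊆ Finset.Icc 1 (n:ℤ)) (hd : 2 * S.card < n) :
    PinSet n (wrd n S (-1)) = ↑S := by
  have hC : (Finset.Icc 1 (n:ℤ) \ S).card = n - S.card := cardC hS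
  have hCpos : ∀ j, j < n - S.card → (1:ℤ) ≤ enum (Finset.Icc 1 (n:ℤ) \ S) j :=
    fun j hj => (mem_Icc_bounds (Finset.sdiff_subset (enum_mem (by omega)))).1
  have hSpos : ∀ j, j < S.card → (1:ℤ) ≤ enum S j :=
    fun j hj => (mem_Icc_bounds (hS (enum_mem (by omega)))).1
  ext x
  simp only [PinSet, Set.mem_setOf_eq, Finset.mem_coe]
  constructor
  · rintro ⟨i, h0, h2, rfl, hl, hr⟩
    by_cases hp : i % 2 = 1 ∧ i < 2*S.card
    · have e : wrd n S (-1) ⟨i, by omega⟩ = enum S (i/2) := wrd_pin_eval hp.1 hp.2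
      rw [e]
      exact enum_mem (by omega)
    · exfalso
      have e0 : wrd n S (-1) ⟨i, by omega⟩ = -1 * enum (Finset.Icc 1 (n:ℤ) \ S)
          (if i ≤ 2*S.card then i/2 else i - S.card) := wrd_np_eval hp
      have b2 := hCpos (if i ≤ 2*S.card then i/2 else i - S.card)
        (by have := idx_lt (i := i) hd (by omega); omega)
      rcases lt_trichotomy i (2*S.card) with hlt | heq | hgt
      · have eR : wrd n S (-1) ⟨i+1, h2⟩ = enum S ((i+1)/2) :=
          wrd_pin_eval (by omega : (i+1) % 2 = 1) (by omega : i+1 < 2*S.card)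
        rw [e0, eR] at hr
        have b1 := hSpos ((i+1)/2) (by omega)
        nlinarith
      · have eL : wrd n S (-1) ⟨i-1, by omega⟩ = enum S ((i-1)/2) :=
          wrd_pin_eval (by omega : (i-1) % 2 = 1) (by omega : i-1 < 2*S.card)
        rw [e0, eL] at hl
        have b1 := hSpos ((i-1)/2) (by omega)
        nlinarith
      · have eL : wrd n S (-1) ⟨i-1, by omega⟩ = -1 * enum (Finset.Icc 1 (n:ℤ) \ S)
            (if i-1 ≤ 2*S.card then (i-1)/2 else i-1 - S.card) :=
          wrd_np_eval (by omega : ¬((i-1) % 2 = 1 ∧ i-1 < 2*S.card))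
        rw [e0, eL] at hl
        rw [if_neg (by omega : ¬ i ≤ 2*S.card)] at hl
        have hlt2 : (if i-1 ≤ 2*S.card then (i-1)/2 else i-1 - S.card) < i - S.card := by
          split_ifs <;> omega
        have := enum_lt_enum hlt2
          (show i - S.card < (Finset.Icc 1 (n:ℤ) \ S).card by omega)
        nlinarith
  · intro hx
    obtain ⟨j, hj, rfl⟩ := enum_surj hx
    refine ⟨2*j+1, by omega, by omega, ?_, ?_, ?_⟩
    · have e : wrd n S (-1) ⟨2*j+1, by omega⟩ = enum S ((2*j+1)/2) :=
        wrd_pin_eval (by omega : (2*j+1) % 2 = 1) (by omega : 2*j+1 < 2*S.card)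
      rw [e, show (2*j+1)/2 = j from by omega]
    · have eL : wrd n S (-1) ⟨2*j+1-1, by omega⟩ = -1 * enum (Finset.Icc 1 (n:ℤ) \ S)
          (if 2*j+1-1 ≤ 2*S.card then (2*j+1-1)/2 else 2*j+1-1 - S.card) :=
        wrd_np_eval (by omega : ¬((2*j+1-1) % 2 = 1 ∧ 2*j+1-1 < 2*S.card))
      have e : wrd n S (-1) ⟨2*j+1, by omega⟩ = enum S ((2*j+1)/2) :=
        wrd_pin_eval (by omega : (2*j+1) % 2 = 1) (by omega : 2*j+1 < 2*S.card)
      rw [e, eL, show (2*j+1)/2 = j from by omega,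
        show (if 2*j+1-1 ≤ 2*S.card then (2*j+1-1)/2 else 2*j+1-1 - S.card) = j from
          by split_ifs <;> omega]
      have b1 := hSpos j hj
      have b2 := hCpos j (by omega)
      nlinarith
    · have eR : wrd n S (-1) ⟨2*j+1+1, by omega⟩ = -1 * enum (Finset.Icc 1 (n:ℤ) \ S)
          (if 2*j+1+1 ≤ 2*S.card then (2*j+1+1)/2 else 2*j+1+1 - S.card) :=
        wrd_np_eval (by omega : ¬((2*j+1+1) % 2 = 1 ∧ 2*j+1+1 < 2*S.card))
      have e : wrd n S (-1) ⟨2*j+1, by omega⟩ = enum S ((2*j+1)/2) :=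
        wrd_pin_eval (by omega : (2*j+1) % 2 = 1) (by omega : 2*j+1 < 2*S.card)
      rw [e, eR, show (2*j+1)/2 = j from by omega,
        show (if 2*j+1+1 ≤ 2*S.card then (2*j+1+1)/2 else 2*j+1+1 - S.card) = j+1 from
          by split_ifs <;> omega]
      have b1 := hSpos j hj
      have b2 := hCpos (j+1) (by omega)
      nlinarith

lemma key_lt (hS : S ⊆ Finset.Icc 1 (n:ℤ)) (hadm : Adm S) {j : ℕ} (hj : j < S.card) :
    enum (Finset.Icc 1 (n:ℤ) \ S) (j+1) < enum S j := by
  set x := enum S j with hx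
  have hxS : x ∈ S := enum_mem hj
  have hb := mem_Icc_bounds (hS hxS)
  have hcard : (S.filter (· ≤ x)).card = j+1 := card_filter_le_enum hj
  have hadm' := hadm x hxS
  rw [hcard] at hadm'
  apply enum_lt_of_card_filter
  have hsplit : (Finset.Icc 1 (n:ℤ)).filter (· < x)
      = S.filter (· < x) ∪ (Finset.Icc 1 (n:ℤ) \ S).filter (· < x) := by
    rw [← Finset.filter_union, Finset.union_sdiff_of_subset hS]
  have hdisj : Disjoint (S.filter (· < x)) ((Finset.Icc 1 (n:ℤ) \ S).filter (· < x)) :=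
    Finset.disjoint_filter_filter Finset.disjoint_sdiff
  have hIcc : (Finset.Icc 1 (n:ℤ)).filter (· < x) = Finset.Icc 1 (x-1) := by
    ext y
    simp only [Finset.mem_filter, Finset.mem_Icc]
    constructor
    · rintro ⟨⟨a, b⟩, c⟩; omega
    · rintro ⟨a, b⟩; exact ⟨⟨a, by omega⟩, by omega⟩
  have hins : S.filter (· ≤ x) = insert x (S.filter (· < x)) := by
    ext y
    simp only [Finset.mem_filter, Finset.mem_insert]
    constructor
    · rintro ⟨hyS, hy⟩
      rcases eq_or_lt_of_le hy with h | h
      · exact Or.inl h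
      · exact Or.inr ⟨hyS, h⟩
    · rintro (rfl | ⟨hyS, hy⟩)
      · exact ⟨hxS, le_refl _⟩
      · exact ⟨hyS, hy.le⟩
  have hnotmem : x ∉ S.filter (· < x) := by simp
  have hcard2 : (S.filter (· ≤ x)).card = (S.filter (· < x)).card + 1 := by
    rw [hins, Finset.card_insert_of_notMem hnotmem]
  have hcards : (Finset.Icc (1:ℤ) (x-1)).card
      = (S.filter (· < x)).card + ((Finset.Icc 1 (n:ℤ) \ S).filter (· < x)).card := by
    rw [← hIcc, hsplit, Finset.card_union_of_disjoint hdisj]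
  rw [Int.card_Icc] at hcards
  omega

lemma pinset_wrd_A (hS : S ⊆ Finset.Icc 1 (n:ℤ)) (hd : 2 * S.card < n) (hadm : Adm S) :
    PinSet n (wrd n S 1) = ↑S := by
  have hC : (Finset.Icc 1 (n:ℤ) \ S).card = n - S.card := cardC hS
  have key : ∀ j, j < S.card → enum (Finset.Icc 1 (n:ℤ) \ S) (j+1) < enum S j :=
    fun j hj => key_lt hS hadm hj
  have key0 : ∀ j, j < S.card → enum (Finset.Icc 1 (n:ℤ) \ S) j < enum S j :=
    fun j hj => lt_trans (enum_lt_enum (Nat.lt_succ_self j) (by omega)) (key j hj)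
  ext x
  simp only [PinSet, Set.mem_setOf_eq, Finset.mem_coe]
  constructor
  · rintro ⟨i, h0, h2, rfl, hl, hr⟩
    by_cases hp : i % 2 = 1 ∧ i < 2*S.card
    · have e : wrd n S 1 ⟨i, by omega⟩ = enum S (i/2) := wrd_pin_eval hp.1 hp.2
      rw [e]
      exact enum_mem (by omega)
    · exfalso
      have e0 : wrd n S 1 ⟨i, by omega⟩ = 1 * enum (Finset.Icc 1 (n:ℤ) \ S)
          (if i ≤ 2*S.card then i/2 else i - S.card) := wrd_np_eval hp
      rw [one_mul] at e0
      rcases lt_trichotomy i (2*S.card) with hlt | heq | hgt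
      · have eR : wrd n S 1 ⟨i+1, h2⟩ = enum S ((i+1)/2) :=
          wrd_pin_eval (by omega : (i+1) % 2 = 1) (by omega : i+1 < 2*S.card)
        rw [e0, eR, if_pos (by omega : i ≤ 2*S.card)] at hr
        have := key0 (i/2) (by omega)
        rw [show (i+1)/2 = i/2 from by omega] at hr
        linarith
      · have eL : wrd n S 1 ⟨i-1, by omega⟩ = enum S ((i-1)/2) :=
          wrd_pin_eval (by omega : (i-1) % 2 = 1) (by omega : i-1 < 2*S.card)
        rw [e0, eL, if_pos (by omega : i ≤ 2*S.card)] at hl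
        have := key (S.card - 1) (by omega)
        rw [show (i-1)/2 = S.card - 1 from by omega,
          show i/2 = S.card from by omega] at hl
        rw [show S.card - 1 + 1 = S.card from by omega] at this
        linarith
      · have eR : wrd n S 1 ⟨i+1, by omega⟩ = 1 * enum (Finset.Icc 1 (n:ℤ) \ S)
            (if i+1 ≤ 2*S.card then (i+1)/2 else i+1 - S.card) :=
          wrd_np_eval (by omega : ¬((i+1) % 2 = 1 ∧ i+1 < 2*S.card))
        rw [one_mul] at eR
        rw [e0, eR, if_neg (by omega : ¬ i ≤ 2*S.card),
          if_neg (by omega : ¬ i+1 ≤ 2*S.card)] at hr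
        have := enum_lt_enum (show i - S.card < i+1 - S.card from by omega)
          (show i+1 - S.card < (Finset.Icc 1 (n:ℤ) \ S).card from by omega)
        linarith
  · intro hx
    obtain ⟨j, hj, rfl⟩ := enum_surj hx
    refine ⟨2*j+1, by omega, by omega, ?_, ?_, ?_⟩
    · have e : wrd n S 1 ⟨2*j+1, by omega⟩ = enum S ((2*j+1)/2) :=
        wrd_pin_eval (by omega : (2*j+1) % 2 = 1) (by omega : 2*j+1 < 2*S.card)
      rw [e, show (2*j+1)/2 = j from by omega]
    · have eL : wrd n S 1 ⟨2*j+1-1, by omega⟩ = 1 * enum (Finset.Icc 1 (n:ℤ) \ S)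
          (if 2*j+1-1 ≤ 2*S.card then (2*j+1-1)/2 else 2*j+1-1 - S.card) :=
        wrd_np_eval (by omega : ¬((2*j+1-1) % 2 = 1 ∧ 2*j+1-1 < 2*S.card))
      have e : wrd n S 1 ⟨2*j+1, by omega⟩ = enum S ((2*j+1)/2) :=
        wrd_pin_eval (by omega : (2*j+1) % 2 = 1) (by omega : 2*j+1 < 2*S.card)
      rw [e, eL, one_mul, show (2*j+1)/2 = j from by omega,
        show (if 2*j+1-1 ≤ 2*S.card then (2*j+1-1)/2 else 2*j+1-1 - S.card) = j from
          by split_ifs <;> omega]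
      exact key0 j hj
    · have eR : wrd n S 1 ⟨2*j+1+1, by omega⟩ = 1 * enum (Finset.Icc 1 (n:ℤ) \ S)
          (if 2*j+1+1 ≤ 2*S.card then (2*j+1+1)/2 else 2*j+1+1 - S.card) :=
        wrd_np_eval (by omega : ¬((2*j+1+1) % 2 = 1 ∧ 2*j+1+1 < 2*S.card))
      have e : wrd n S 1 ⟨2*j+1, by omega⟩ = enum S ((2*j+1)/2) :=
        wrd_pin_eval (by omega : (2*j+1) % 2 = 1) (by omega : 2*j+1 < 2*S.card)
      rw [e, eR, one_mul, show (2*j+1)/2 = j from by omega,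
        show (if 2*j+1+1 ≤ 2*S.card then (2*j+1+1)/2 else 2*j+1+1 - S.card) = j+1 from
          by split_ifs <;> omega]
      exact key j hj

lemma wrd_A_pos (hS : S ⊆ Finset.Icc 1 (n:ℤ)) (hd : 2 * S.card < n) :
    ∀ i, 0 < wrd n S 1 i := by
  intro i
  by_cases hp : i.1 % 2 = 1 ∧ i.1 < 2*S.card
  · rw [wrd_pin_eval hp.1 hp.2]
    have := (mem_Icc_bounds (hS (enum_mem (show i.1/2 < S.card by omega)))).1
    omega
  · rw [wrd_np_eval hp, one_mul]
    have hC : (Finset.Icc 1 (n:ℤ) \ S).card = n - S.card := cardC hS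
    have hidx := idx_lt (i := i.1) hd i.2
    have := (mem_Icc_bounds (Finset.sdiff_subset
      (enum_mem (F := Finset.Icc 1 (n:ℤ) \ S)
        (j := if i.1 ≤ 2*S.card then i.1/2 else i.1 - S.card) (by omega)))).1
    omega

/-- extension of a word on `Fin n` to all of `ℕ` -/
def ext (n : ℕ) (w : Fin n → ℤ) : ℕ → ℤ := fun p => if hp : p < n then w ⟨p, hp⟩ else 0

lemma ext_eq {n : ℕ} (w : Fin n → ℤ) {p : ℕ} (hp : p < n) : ext n w p = w ⟨p, hp⟩ :=
  dif_pos hp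

lemma nonadj_s19 {n : ℕ} (hn : 0 < n) (P : Finset ℕ) (h1 : ∀ i ∈ P, 1 ≤ i ∧ i + 1 < n)
    (h2 : ∀ i ∈ P, i + 1 ∉ P) : 2 * P.card < n := by
  have hsub : P ∪ P.image (· + 1) ⊆ Finset.Ico 1 n := by
    intro i hi
    rcases Finset.mem_union.1 hi with hi | hi
    · have := h1 i hi
      rw [Finset.mem_Ico]
      omega
    · obtain ⟨j, hj, rfl⟩ := Finset.mem_image.1 hi
      have := h1 j hj
      rw [Finset.mem_Ico]
      omega
  have hdisj : Disjoint P (P.image (· + 1)) := by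
    rw [Finset.disjoint_left]
    intro i hiP hiI
    obtain ⟨j, hjP, rfl⟩ := Finset.mem_image.1 hiI
    exact h2 j hjP hiP
  have hcard := Finset.card_le_card hsub
  rw [Finset.card_union_of_disjoint hdisj,
    Finset.card_image_of_injective _ (add_left_injective 1), Nat.card_Ico] at hcard
  omega

variable {n : ℕ} {S : Finset ℤ}

lemma pin_positions (w : Fin n → ℤ) (hpin : PinSet n w = ↑S) :
    ∀ x ∈ S, ∃ (i : ℕ) (h0 : 0 < i) (h2 : i + 1 < n),
      w ⟨i, by omega⟩ = x ∧ w ⟨i - 1, by omega⟩ < w ⟨i, by omega⟩ ∧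
        w ⟨i + 1, h2⟩ < w ⟨i, by omega⟩ := by
  intro x hx
  have : x ∈ PinSet n w := by rw [hpin]; exact hx
  exact this

lemma b_nec (hn : 0 < n) (hpos : ∀ x ∈ S, 0 < x) (h : APSB n S) :
    S ⊆ Finset.Icc 1 (n:ℤ) ∧ 2 * S.card < n := by
  obtain ⟨w, ⟨hb, hinj⟩, hpin⟩ := h
  choose pos h0 h2 hval hl hr using pin_positions w hpin
  constructor
  · intro x hx
    have hle : |x| ≤ n := by
      rw [← hval x hx]
      exact (hb ⟨pos x hx, by have := h2 x hx; omega⟩).2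
    have hx0 := hpos x hx
    rw [abs_of_pos hx0] at hle
    rw [Finset.mem_Icc]
    omega
  · have hcard : (S.attach.image (fun x => pos x.1 x.2)).card = S.card := by
      rw [Finset.card_image_of_injOn, Finset.card_attach]
      intro a _ b _ hab
      have e : (⟨pos a.1 a.2, by have := h2 a.1 a.2; omega⟩ : Fin n)
          = ⟨pos b.1 b.2, by have := h2 b.1 b.2; omega⟩ := Fin.ext hab
      have : a.1 = b.1 := by
        rw [← hval a.1 a.2, ← hval b.1 b.2]
        exact congrArg w e
      exact Subtype.ext this
    rw [← hcard]
    apply nonadj_s19 hn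
    · intro i hi
      obtain ⟨y, _, rfl⟩ := Finset.mem_image.1 hi
      exact ⟨h0 y.1 y.2, h2 y.1 y.2⟩
    · intro i hi hi1
      obtain ⟨y, _, hy⟩ := Finset.mem_image.1 hi
      obtain ⟨z, _, hz⟩ := Finset.mem_image.1 hi1
      have h0z := h0 z.1 z.2
      have h2z := h2 z.1 z.2
      have h2y := h2 y.1 y.2
      have e1 : (⟨pos z.1 z.2 - 1, by omega⟩ : Fin n)
          = ⟨pos y.1 y.2, by omega⟩ := Fin.ext (by simp only; omega)
      have hA := hl z.1 z.2
      rw [e1] at hA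
      have e2 : (⟨pos y.1 y.2 + 1, by omega⟩ : Fin n)
          = ⟨pos z.1 z.2, by omega⟩ := Fin.ext (by simp only; omega)
      have hB := hr y.1 y.2
      rw [e2] at hB
      exact absurd hB (not_lt.2 hA.le)

lemma a_nec (h : APSA n S) : Adm S := by
  classical
  obtain ⟨w, ⟨hb, hinj⟩, hwpos, hpin⟩ := h
  have hwinj : Function.Injective w := fun i j hij => hinj (congrArg (fun t => |t|) hij)
  choose pos h0 h2 hval hl hr using pin_positions w hpin
  intro x hx
  set F := S.filter (· ≤ x) with hF
  have hFS : ∀ y ∈ F, y ∈ S := fun y hy => (Finset.mem_filter.1 hy).1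
  have hFle : ∀ y ∈ F, y ≤ x := fun y hy => (Finset.mem_filter.1 hy).2
  have upos : ∀ p, p < n → 0 < ext n w p := by
    intro p hp
    rw [ext_eq w hp]
    exact hwpos _
  have uval : ∀ y (hy : y ∈ S), ext n w (pos y hy) = y := by
    intro y hy
    rw [ext_eq w (show pos y hy < n from by have := h2 y hy; omega)]
    exact hval y hy
  have ul : ∀ y (hy : y ∈ S), ext n w (pos y hy - 1) < ext n w (pos y hy) := by
    intro y hy
    rw [ext_eq w (show pos y hy - 1 < n from by have := h2 y hy; omega),
      ext_eq w (show pos y hy < n from by have := h2 y hy; omega)]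
    exact hl y hy
  have ur : ∀ y (hy : y ∈ S), ext n w (pos y hy + 1) < ext n w (pos y hy) := by
    intro y hy
    rw [ext_eq w (h2 y hy),
      ext_eq w (show pos y hy < n from by have := h2 y hy; omega)]
    exact hr y hy
  have uinj : ∀ p q, p < n → q < n → ext n w p = ext n w q → p = q := by
    intro p q hp hq hpq
    rw [ext_eq w hp, ext_eq w hq] at hpq
    have := hwinj hpq
    exact congrArg Fin.val this
  set P1 := F.attach.image (fun y => pos y.1 (hFS y.1 y.2)) with hP1
  set P2 := F.attach.image (fun y => pos y.1 (hFS y.1 y.2) - 1) with hP2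
  have posinj : ∀ (y : ℤ) (hy : y ∈ S) (z : ℤ) (hz : z ∈ S),
      pos y hy = pos z hz → y = z := by
    intro y hy z hz he
    rw [← uval y hy, ← uval z hz, he]
  have hc1 : P1.card = F.card := by
    rw [hP1, Finset.card_image_of_injOn, Finset.card_attach]
    intro a _ b _ hab
    exact Subtype.ext (posinj _ _ _ _ hab)
  have hc2 : P2.card = F.card := by
    rw [hP2, Finset.card_image_of_injOn, Finset.card_attach]
    intro a _ b _ hab
    simp only at hab
    have ha0 := h0 a.1 (hFS a.1 a.2)
    have hb0 := h0 b.1 (hFS b.1 b.2)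
    exact Subtype.ext (posinj _ _ _ _ (by omega))
  have hdisj : Disjoint P1 P2 := by
    rw [Finset.disjoint_left]
    intro p hp1 hp2
    obtain ⟨y, _, hy⟩ := Finset.mem_image.1 hp1
    obtain ⟨z, _, hz⟩ := Finset.mem_image.1 hp2
    have h0z := h0 z.1 (hFS z.1 z.2)
    have e1 : pos z.1 (hFS z.1 z.2) - 1 = pos y.1 (hFS y.1 y.2) := by omega
    have e2 : pos y.1 (hFS y.1 y.2) + 1 = pos z.1 (hFS z.1 z.2) := by omega
    have hA := ul z.1 (hFS z.1 z.2)
    rw [e1] at hA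
    have hB := ur y.1 (hFS y.1 y.2)
    rw [e2] at hB
    exact absurd hB (not_lt.2 hA.le)
  have hxF : x ∈ F := Finset.mem_filter.2 ⟨hx, le_refl x⟩
  have hP1ne : P1.Nonempty :=
    ⟨_, Finset.mem_image.2 ⟨⟨x, hxF⟩, Finset.mem_attach _ _, rfl⟩⟩
  obtain ⟨y₀, _, hy₀⟩ := Finset.mem_image.1 (P1.max'_mem hP1ne)
  have hJle : ∀ p ∈ P1, p ≤ P1.max' hP1ne := fun p hp => P1.le_max' p hp
  have hJ1 : P1.max' hP1ne + 1 ∉ P1 ∪ P2 := by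
    intro hmem
    rcases Finset.mem_union.1 hmem with hm | hm
    · exact absurd (hJle _ hm) (by omega)
    · obtain ⟨z, _, hz⟩ := Finset.mem_image.1 hm
      have hz1 : pos z.1 (hFS z.1 z.2) ∈ P1 :=
        Finset.mem_image.2 ⟨z, Finset.mem_attach _ _, rfl⟩
      have := hJle _ hz1
      have h0z := h0 z.1 (hFS z.1 z.2)
      omega
  have hTcard : (insert (P1.max' hP1ne + 1) (P1 ∪ P2)).card = 2 * F.card + 1 := by
    rw [Finset.card_insert_of_notMem hJ1, Finset.card_union_of_disjoint hdisj, hc1, hc2]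
    ring
  have hTlt : ∀ p ∈ insert (P1.max' hP1ne + 1) (P1 ∪ P2), p < n := by
    intro p hp
    rcases Finset.mem_insert.1 hp with rfl | hp
    · have := h2 y₀.1 (hFS y₀.1 y₀.2)
      omega
    · rcases Finset.mem_union.1 hp with hp | hp
      · obtain ⟨z, _, rfl⟩ := Finset.mem_image.1 hp
        have := h2 z.1 (hFS z.1 z.2)
        omega
      · obtain ⟨z, _, rfl⟩ := Finset.mem_image.1 hp
        have := h2 z.1 (hFS z.1 z.2)
        omega
  have himg : (insert (P1.max' hP1ne + 1) (P1 ∪ P2)).image (ext n w) ⊆ Finset.Icc 1 x := by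
    intro v hv
    obtain ⟨p, hp, rfl⟩ := Finset.mem_image.1 hv
    rw [Finset.mem_Icc]
    refine ⟨by have := upos p (hTlt p hp); omega, ?_⟩
    rcases Finset.mem_insert.1 hp with rfl | hp
    · have hA := ur y₀.1 (hFS y₀.1 y₀.2)
      rw [uval y₀.1 (hFS y₀.1 y₀.2)] at hA
      rw [hy₀] at hA
      have := hFle y₀.1 y₀.2
      omega
    · rcases Finset.mem_union.1 hp with hp | hp
      · obtain ⟨z, _, rfl⟩ := Finset.mem_image.1 hp
        rw [uval z.1 (hFS z.1 z.2)]
        exact hFle z.1 z.2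
      · obtain ⟨z, _, rfl⟩ := Finset.mem_image.1 hp
        have hA := ul z.1 (hFS z.1 z.2)
        rw [uval z.1 (hFS z.1 z.2)] at hA
        have := hFle z.1 z.2
        omega
  have hicard : ((insert (P1.max' hP1ne + 1) (P1 ∪ P2)).image (ext n w)).card
      = (insert (P1.max' hP1ne + 1) (P1 ∪ P2)).card :=
    Finset.card_image_of_injOn (fun p hp q hq h => uinj p q (hTlt p hp) (hTlt q hq) h)
  have hfin := Finset.card_le_card himg
  rw [hicard, hTcard, Int.card_Icc] at hfin
  omega

open scoped Classical

lemma adm_bound {n : ℕ} {S : Finset ℤ} (hS : S ⊆ Finset.Icc 1 (n:ℤ)) (hadm : Adm S)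
    (hn : 0 < n) : 2 * S.card < n := by
  rcases S.eq_empty_or_nonempty with rfl | hne
  · simpa using hn
  · have hmax := S.max'_mem hne
    have h1 := hadm _ hmax
    have hfull : S.filter (· ≤ S.max' hne) = S :=
      Finset.filter_eq_self.2 (fun y hy => S.le_max' y hy)
    rw [hfull] at h1
    have h2 := (mem_Icc_bounds (hS hmax)).2
    omega

noncomputable def hcnt (n d : ℕ) : ℕ :=
  ((Finset.Icc (1:ℤ) (n:ℤ)).powerset.filter (fun S => Adm S ∧ S.card = d)).card

lemma hcnt_zero (n : ℕ) : hcnt n 0 = 1 := by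
  rw [hcnt]
  have : (Finset.Icc (1:ℤ) (n:ℤ)).powerset.filter (fun S => Adm S ∧ S.card = 0) = {∅} := by
    ext S
    simp only [Finset.mem_filter, Finset.mem_powerset, Finset.mem_singleton]
    constructor
    · rintro ⟨_, _, hc⟩
      exact Finset.card_eq_zero.1 hc
    · rintro rfl
      exact ⟨Finset.empty_subset _, fun x hx => absurd hx (Finset.notMem_empty x), rfl⟩
  rw [this, Finset.card_singleton]

lemma hcnt_vanish {n d : ℕ} (hd : 1 ≤ d) (h : n ≤ 2*d) : hcnt n d = 0 := by
  rw [hcnt, Finset.card_eq_zero, Finset.filter_eq_empty_iff]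
  rintro S hS ⟨hadm, hcard⟩
  have hS' := Finset.mem_powerset.1 hS
  have hne : S.Nonempty := Finset.card_pos.1 (by omega)
  have hmax := S.max'_mem hne
  have h1 := hadm _ hmax
  have hfull : S.filter (· ≤ S.max' hne) = S :=
    Finset.filter_eq_self.2 (fun y hy => S.le_max' y hy)
  rw [hfull] at h1
  have h2 := (mem_Icc_bounds (hS' hmax)).2
  omega

lemma adm_erase {n : ℕ} {S : Finset ℤ} (hS : S ⊆ Finset.Icc 1 (n:ℤ))
    (hadm : Adm S) : Adm (S.erase (n:ℤ)) := by
  intro x hx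
  have hxS := Finset.mem_of_mem_erase hx
  have hxn := Finset.ne_of_mem_erase hx
  have hxb := mem_Icc_bounds (hS hxS)
  have hfe : (S.erase (n:ℤ)).filter (· ≤ x) = S.filter (· ≤ x) := by
    rw [Finset.filter_erase, Finset.erase_eq_of_notMem]
    intro hmem
    have := (Finset.mem_filter.1 hmem).2
    omega
  rw [hfe]
  exact hadm x hxS

lemma adm_insert {n : ℕ} {T : Finset ℤ} (hlt : ∀ y ∈ T, y < (n:ℤ)) (hadm : Adm T)
    (hnT : (n:ℤ) ∉ T) (hc : 2 * T.card + 2 < n) : Adm (insert (n:ℤ) T) := by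
  intro x hx
  rcases Finset.mem_insert.1 hx with rfl | hxT
  · have hfull : (insert ((n:ℕ):ℤ) T).filter (· ≤ ((n:ℕ):ℤ)) = insert ((n:ℕ):ℤ) T := by
      apply Finset.filter_eq_self.2
      intro y hy
      rcases Finset.mem_insert.1 hy with rfl | hyT
      · exact le_refl _
      · exact (hlt y hyT).le
    rw [hfull, Finset.card_insert_of_notMem hnT]
    push_cast
    omega
  · have hxn := hlt x hxT
    have hfe : (insert (n:ℤ) T).filter (· ≤ x) = T.filter (· ≤ x) := by
      rw [Finset.filter_insert, if_neg (by omega)]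
    rw [hfe]
    exact hadm x hxT

lemma hcnt_rec {n d : ℕ} (hn : 1 ≤ n) (hd : 1 ≤ d) (h2d : 2*d < n) :
    hcnt n d = hcnt (n-1) d + hcnt (n-1) (d-1) := by
  have hcast : ((n-1 : ℕ) : ℤ) = (n:ℤ) - 1 := by push_cast [hn]; ring
  set A := (Finset.Icc (1:ℤ) (n:ℤ)).powerset.filter (fun S => Adm S ∧ S.card = d) with hA
  have hsplit : A.card = (A.filter (fun S => (n:ℤ) ∈ S)).card
      + (A.filter (fun S => ¬ (n:ℤ) ∈ S)).card :=
    (Finset.card_filter_add_card_filter_not _).symm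
  have hpart2 : A.filter (fun S => ¬ (n:ℤ) ∈ S)
      = (Finset.Icc (1:ℤ) ((n-1:ℕ):ℤ)).powerset.filter (fun S => Adm S ∧ S.card = d) := by
    ext S
    simp only [hA, Finset.mem_filter, Finset.mem_powerset]
    constructor
    · rintro ⟨⟨hsub, h1, h2⟩, hnmem⟩
      refine ⟨?_, h1, h2⟩
      intro y hy
      have := mem_Icc_bounds (hsub hy)
      rw [Finset.mem_Icc, hcast]
      have : y ≠ (n:ℤ) := fun h => hnmem (h ▸ hy)
      omega
    · rintro ⟨hsub, h1, h2⟩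
      have hmem : ∀ y ∈ S, 1 ≤ y ∧ y ≤ (n:ℤ) - 1 := by
        intro y hy
        have := hsub hy
        rw [Finset.mem_Icc, hcast] at this
        exact this
      refine ⟨⟨?_, h1, h2⟩, ?_⟩
      · intro y hy
        have := hmem y hy
        rw [Finset.mem_Icc]
        omega
      · intro hmemn
        have := hmem _ hmemn
        omega
  have hpart1 : (A.filter (fun S => (n:ℤ) ∈ S)).card
      = ((Finset.Icc (1:ℤ) ((n-1:ℕ):ℤ)).powerset.filter
          (fun S => Adm S ∧ S.card = d - 1)).card := by
    refine Finset.card_bij' (fun S _ => S.erase (n:ℤ)) (fun T _ => insert (n:ℤ) T)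
      ?hi ?hj ?li ?ri
    case hi =>
      intro S hS
      simp only [hA, Finset.mem_filter, Finset.mem_powerset] at hS
      obtain ⟨⟨hsub, hadm, hcard⟩, hmemn⟩ := hS
      simp only [Finset.mem_filter, Finset.mem_powerset]
      refine ⟨?_, adm_erase hsub hadm, ?_⟩
      · intro y hy
        have hyS := Finset.mem_of_mem_erase hy
        have hyn := Finset.ne_of_mem_erase hy
        have := mem_Icc_bounds (hsub hyS)
        rw [Finset.mem_Icc, hcast]
        omega
      · rw [Finset.card_erase_of_mem hmemn, hcard]
    case hj =>
      intro T hT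
      simp only [Finset.mem_filter, Finset.mem_powerset] at hT
      obtain ⟨hsub, hadm, hcard⟩ := hT
      have hlt : ∀ y ∈ T, y < (n:ℤ) := by
        intro y hy
        have := hsub hy
        rw [Finset.mem_Icc, hcast] at this
        omega
      have hnT : (n:ℤ) ∉ T := fun h => absurd (hlt _ h) (by omega)
      simp only [hA, Finset.mem_filter, Finset.mem_powerset]
      refine ⟨⟨?_, adm_insert hlt hadm hnT (by omega), ?_⟩, Finset.mem_insert_self _ _⟩
      · intro y hy
        rcases Finset.mem_insert.1 hy with rfl | hyT
        · rw [Finset.mem_Icc]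
          omega
        · have := hlt y hyT
          have := hsub hyT
          rw [Finset.mem_Icc, hcast] at this
          rw [Finset.mem_Icc]
          omega
      · rw [Finset.card_insert_of_notMem hnT, hcard]
        omega
    case li =>
      intro S hS
      simp only [hA, Finset.mem_filter] at hS
      exact Finset.insert_erase hS.2
    case ri =>
      intro T hT
      simp only [Finset.mem_filter, Finset.mem_powerset] at hT
      apply Finset.erase_insert
      intro h
      have := hT.1 h
      rw [Finset.mem_Icc, hcast] at this
      omega
  rw [hcnt, hsplit, hpart1, hpart2]
  rw [hcnt, hcnt]
  omega

lemma central {d : ℕ} (hd : 1 ≤ d) : 2 * Nat.choose (2*d - 1) (d-1) = Nat.choose (2*d) d := by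
  obtain ⟨e, rfl⟩ := Nat.exists_eq_add_of_le hd
  have h1 : Nat.choose (2*(1+e)) (1+e) = Nat.choose (2*e+1) e + Nat.choose (2*e+1) (e+1) := by
    rw [show 2*(1+e) = (2*e+1)+1 from by ring, show (1+e) = e+1 from by ring]
    exact Nat.choose_succ_succ' (2*e+1) e ▸ rfl
  have h2 : Nat.choose (2*e+1) e = Nat.choose (2*e+1) (e+1) := by
    have := Nat.choose_symm (show e+1 ≤ 2*e+1 by omega)
    rw [show 2*e+1-(e+1) = e from by omega] at this
    exact this
  rw [show 2*(1+e)-1 = 2*e+1 from by omega, show 1+e-1 = e from by omega]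
  omega

lemma hcnt_choose : ∀ n, ∀ d, 1 ≤ d → 2*d ≤ n →
    hcnt n d + 2 * Nat.choose (n-1) (d-1) = Nat.choose n d := by
  intro n
  induction n using Nat.strong_induction_on with
  | _ n IH =>
    intro d hd hdn
    rcases eq_or_lt_of_le hdn with heq | hlt
    · rw [hcnt_vanish hd (by omega), ← heq, central hd]
      omega
    · have IH1 := IH (n-1) (by omega) d hd (by omega)
      rcases eq_or_lt_of_le hd with hd1 | hd2
      · -- d = 1
        subst hd1
        rw [hcnt_rec (by omega) (by omega) hlt]
        rw [show (1:ℕ) - 1 = 0 from rfl, hcnt_zero]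
        rw [show (1:ℕ) - 1 = 0 from rfl] at IH1
        have e1 : Nat.choose (n-1) 0 = 1 := Nat.choose_zero_right _
        have e2 : Nat.choose n 1 = n := Nat.choose_one_right _
        have e3 : Nat.choose (n-1) 1 = n-1 := Nat.choose_one_right _
        have e4 : Nat.choose (n-1-1) 0 = 1 := Nat.choose_zero_right _
        omega
      · -- d ≥ 2
        have IH2 := IH (n-1) (by omega) (d-1) (by omega) (by omega)
        rw [hcnt_rec (by omega) (by omega) hlt]
        have p1 : Nat.choose n d = Nat.choose (n-1) (d-1) + Nat.choose (n-1) d := by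
          have := Nat.choose_succ_succ' (n-1) (d-1)
          rw [show n-1+1 = n from by omega, show d-1+1 = d from by omega] at this
          exact this
        simp only [show n-1-1 = n-2 from by omega, show d-1-1 = d-2 from by omega] at IH1 IH2
        have p2 : Nat.choose (n-1) (d-1) = Nat.choose (n-2) (d-2) + Nat.choose (n-2) (d-1) := by
          have := Nat.choose_succ_succ' (n-2) (d-2)
          rw [show n-2+1 = n-1 from by omega, show d-2+1 = d-1 from by omega] at this
          exact this
        omega

section Final
open Finset
variable {n : ℕ} {S : Finset ℤ}

lemma b_suf (hS : S ⊆ Finset.Icc 1 (n:ℤ)) (hd : 2 * S.card < n) : APSB n S :=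
  ⟨wrd n S (-1), wrd_isSignedPerm hS hd (Or.inr rfl), pinset_wrd_B hS hd⟩

lemma a_suf (hS : S ⊆ Finset.Icc 1 (n:ℤ)) (hd : 2 * S.card < n) (hadm : Adm S) : APSA n S :=
  ⟨wrd n S 1, wrd_isSignedPerm hS hd (Or.inl rfl), wrd_A_pos hS hd, pinset_wrd_A hS hd hadm⟩

end Final

theorem stmt19 (k : ℕ) (hk : 1 ≤ k) :
    {S : Finset ℤ | (∀ x ∈ S, 0 < x) ∧ APSB (2 * k) S ∧ ¬ APSA (2 * k) S}.ncard
      = 2 ^ (2 * k - 1) - Nat.choose (2 * k) k := by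
  obtain ⟨m, rfl⟩ : ∃ m, k = m + 1 := ⟨k - 1, by omega⟩
  have hn : 0 < 2 * (m+1) := by omega
  set G : Finset ℤ := Finset.Icc (1:ℤ) ((2*(m+1) : ℕ) : ℤ) with hG
  set T : Finset (Finset ℤ) :=
    G.powerset.filter (fun S => 2*S.card < 2*(m+1) ∧ ¬ Adm S) with hT
  have hset : {S : Finset ℤ | (∀ x ∈ S, 0 < x) ∧ APSB (2*(m+1)) S ∧ ¬ APSA (2*(m+1)) S}
      = ↑T := by
    ext S
    rw [Set.mem_setOf_eq, Finset.mem_coe, hT, Finset.mem_filter, Finset.mem_powerset]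
    constructor
    · rintro ⟨hpos, hB, hnA⟩
      obtain ⟨hsub, hd⟩ := b_nec hn hpos hB
      exact ⟨hsub, hd, fun hadm => hnA (a_suf hsub hd hadm)⟩
    · rintro ⟨hsub, ⟨hd, hnadm⟩⟩
      exact ⟨fun x hx => by have := mem_Icc_bounds (hsub hx); omega,
        b_suf hsub hd, fun hA => hnadm (a_nec hA)⟩
  rw [hset, Set.ncard_coe_finset]
  have hIccCard : G.card = 2*(m+1) := by rw [hG, Int.card_Icc]; simp; omega
  have hsplit : T.card + (G.powerset.filter (fun S => Adm S)).card
      = (G.powerset.filter (fun S => 2*S.card < 2*(m+1))).card := by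
    have h1 := Finset.card_filter_add_card_filter_not
      (s := G.powerset.filter (fun S => 2*S.card < 2*(m+1))) (p := fun S => Adm S)
    have e1 : (G.powerset.filter (fun S => 2*S.card < 2*(m+1))).filter (fun S => Adm S)
        = G.powerset.filter (fun S => Adm S) := by
      ext S
      simp only [Finset.mem_filter, Finset.mem_powerset]
      constructor
      · tauto
      · rintro ⟨h1, h2⟩
        exact ⟨⟨h1, adm_bound h1 h2 hn⟩, h2⟩
    have e2 : (G.powerset.filter (fun S => 2*S.card < 2*(m+1))).filter (fun S => ¬ Adm S)
        = T := by
      ext S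
      simp only [hT, Finset.mem_filter, Finset.mem_powerset]
      tauto
    rw [e1, e2] at h1
    omega
  have hN1 : (G.powerset.filter (fun S => 2*S.card < 2*(m+1))).card
      = ∑ d ∈ Finset.range (m+1), Nat.choose (2*(m+1)) d := by
    have e : G.powerset.filter (fun S => 2*S.card < 2*(m+1))
        = (Finset.range (m+1)).biUnion (fun d => Finset.powersetCard d G) := by
      ext S
      simp only [Finset.mem_filter, Finset.mem_powerset, Finset.mem_biUnion,
        Finset.mem_range, Finset.mem_powersetCard]
      constructor
      · rintro ⟨h1, h2⟩
        exact ⟨S.card, by omega, h1, rfl⟩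
      · rintro ⟨d, hd, h1, rfl⟩
        exact ⟨h1, by omega⟩
    rw [e, Finset.card_biUnion]
    · apply Finset.sum_congr rfl
      intro d _
      rw [Finset.card_powersetCard, hIccCard]
    · intro x _ y _ hxy
      rw [Function.onFun, Finset.disjoint_left]
      intro S hx hy
      rw [Finset.mem_powersetCard] at hx hy
      exact hxy (hx.2 ▸ hy.2 ▸ rfl)
  have hNA : (G.powerset.filter (fun S => Adm S)).card
      = ∑ d ∈ Finset.range (m+1), hcnt (2*(m+1)) d := by
    have e : G.powerset.filter (fun S => Adm S)
        = (Finset.range (m+1)).biUnion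
            (fun d => G.powerset.filter (fun S => Adm S ∧ S.card = d)) := by
      ext S
      simp only [Finset.mem_filter, Finset.mem_powerset, Finset.mem_biUnion, Finset.mem_range]
      constructor
      · rintro ⟨h1, h2⟩
        have := adm_bound h1 h2 hn
        exact ⟨S.card, by omega, h1, h2, rfl⟩
      · rintro ⟨d, hd, h1, h2, _⟩
        exact ⟨h1, h2⟩
    rw [e, Finset.card_biUnion]
    · apply Finset.sum_congr rfl
      intro d _
      rw [hcnt]
    · intro x _ y _ hxy
      rw [Function.onFun, Finset.disjoint_left]
      intro S hx hy
      rw [Finset.mem_filter] at hx hy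
      exact hxy (hx.2.2 ▸ hy.2.2 ▸ rfl)
  have hstep : ∀ d ∈ Finset.range (m+1), Nat.choose (2*(m+1)) d
      = hcnt (2*(m+1)) d + 2 * (if d = 0 then 0 else Nat.choose (2*m+1) (d-1)) := by
    intro d hd
    rw [Finset.mem_range] at hd
    rcases Nat.eq_zero_or_pos d with rfl | hd0
    · rw [if_pos rfl, hcnt_zero]
      simp
    · rw [if_neg (by omega)]
      have h := hcnt_choose (2*(m+1)) d hd0 (by omega)
      rw [show 2*(m+1)-1 = 2*m+1 from by omega] at h
      omega
  have hsum : ∑ d ∈ Finset.range (m+1), Nat.choose (2*(m+1)) d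
      = (∑ d ∈ Finset.range (m+1), hcnt (2*(m+1)) d)
        + 2 * ∑ e ∈ Finset.range m, Nat.choose (2*m+1) e := by
    rw [Finset.sum_congr rfl hstep, Finset.sum_add_distrib, ← Finset.mul_sum]
    congr 1
    congr 1
    rw [Finset.sum_range_succ']
    simp
  have hhalf : (∑ e ∈ Finset.range m, Nat.choose (2*m+1) e) + Nat.choose (2*m+1) m
      = 4^m := by
    rw [← Finset.sum_range_succ]
    exact Nat.sum_range_choose_halfway m
  have hcent : 2 * Nat.choose (2*m+1) m = Nat.choose (2*(m+1)) (m+1) := by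
    have h := central (d := m+1) (by omega)
    rw [show 2*(m+1)-1 = 2*m+1 from by omega, show m+1-1 = m from by omega] at h
    exact h
  have hpow : 2 ^ (2*(m+1) - 1) = 2 * 4^m := by
    rw [show 2*(m+1)-1 = 2*m+1 from by omega, pow_succ, pow_mul]
    ring
  omega
end
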